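/- arXiv:1401.6156 — 5 statements merged into one kernel-verified Lean document; each statement's English description precedes it below -/
import Mathlib

section
/- (Olshanskii's Lemma) Let n, m ≥ 0 and let Z_{n,m} denote the centralizer of the subalgebra ℂ[S_n] in the group algebra ℂ[S_{n+m}], where S_n ⊆ S_{n+m} is the subgroup of permutations fixing n+1, …, n+m. Then Z_{n,m} is generated as a ℂ-algebra by: (a) the group algebra of the subgroup S'_m ⊆ S_{n+m} of permutations fixing 1, …, n pointwise, (b) the center Z_n of ℂ[S_n], and (c) the Jucys–Murphy elements L_{n+1}, …, L_{n+m}. -/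
open MonoidAlgebra Equiv Finset

/-- The `k`-th Jucys–Murphy element of `ℂ[S_N]` (0-indexed: `JM N k` corresponds to the
classical `L_{k+1} = Σ_{m < k+1} (m, k+1)`, so `JM N 0 = L₁ = 0`). -/
noncomputable def JM (N : ℕ) (k : Fin N) : MonoidAlgebra ℂ (Equiv.Perm (Fin N)) :=
  ∑ m ∈ Finset.univ.filter (fun m : Fin N => m < k),
    MonoidAlgebra.of ℂ (Equiv.Perm (Fin N)) (Equiv.swap m k)

/-- The group algebra `ℂ[S_n]` inside `ℂ[S_{n+m}]`, where `S_n` is the subgroup of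
permutations fixing the letters `n+1, …, n+m` (0-indexed: fixing all `j ≥ n`). -/
noncomputable def lowerGroupAlgebra (n m : ℕ) :
    Subalgebra ℂ (MonoidAlgebra ℂ (Equiv.Perm (Fin (n + m)))) :=
  Algebra.adjoin ℂ
    {a | ∃ σ : Equiv.Perm (Fin (n + m)),
      (∀ j : Fin (n + m), n ≤ (j : ℕ) → σ j = j) ∧
      a = MonoidAlgebra.of ℂ (Equiv.Perm (Fin (n + m))) σ}

namespace OlshAux

variable {n m : ℕ}

/-- permutations fixing all big letters (the subgroup `S_n`). -/
def BigFix (n : ℕ) {m : ℕ} (σ : Equiv.Perm (Fin (n + m))) : Prop :=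
  ∀ j : Fin (n + m), n ≤ (j : ℕ) → σ j = j

/-- permutations fixing all small letters (the subgroup `S'_m`). -/
def SmallFix (n : ℕ) {m : ℕ} (σ : Equiv.Perm (Fin (n + m))) : Prop :=
  ∀ j : Fin (n + m), (j : ℕ) < n → σ j = j

theorem BigFix.small {h : Equiv.Perm (Fin (n + m))} (hh : BigFix n h)
    {x : Fin (n + m)} (hx : (x : ℕ) < n) : ((h x : Fin (n + m)) : ℕ) < n := by
  by_contra hb
  have hfix : h (h x) = h x := hh (h x) (le_of_not_gt hb)
  have : h x = x := h.injective hfix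
  rw [this] at hb; exact hb hx

theorem SmallFix.big {κ : Equiv.Perm (Fin (n + m))} (hκ : SmallFix n κ)
    {x : Fin (n + m)} (hx : n ≤ (x : ℕ)) : n ≤ ((κ x : Fin (n + m)) : ℕ) := by
  by_contra hb
  have hfix : κ (κ x) = κ x := hκ (κ x) (lt_of_not_ge fun h' => hb h')
  have heq : κ x = x := κ.injective hfix
  rw [heq] at hb; exact hb hx

theorem SmallFix.comm {κ h : Equiv.Perm (Fin (n + m))} (hκ : SmallFix n κ)
    (hh : BigFix n h) : κ * h = h * κ :=
  Equiv.ext fun x => by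
    simp only [Equiv.Perm.mul_apply]
    by_cases hx : (x : ℕ) < n
    · rw [hκ x hx, hκ (h x) (hh.small hx)]
    · rw [hh x (le_of_not_gt hx), hh (κ x) (hκ.big (le_of_not_gt hx))]

theorem BigFix.conj_smallfix {κ h : Equiv.Perm (Fin (n + m))} (hκ : SmallFix n κ)
    (hh : BigFix n h) : h * κ * h⁻¹ = κ := by
  rw [← hκ.comm hh, mul_assoc, mul_inv_cancel, mul_one]

theorem BigFix.one : BigFix n (1 : Equiv.Perm (Fin (n + m))) := fun _ _ => rfl

theorem BigFix.mul {σ τ : Equiv.Perm (Fin (n + m))} (hσ : BigFix n σ) (hτ : BigFix n τ) :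
    BigFix n (σ * τ) := fun j hj => by
  simp only [Equiv.Perm.mul_apply, hτ j hj, hσ j hj]

theorem BigFix.inv {σ : Equiv.Perm (Fin (n + m))} (hσ : BigFix n σ) :
    BigFix n σ⁻¹ := fun j hj => by
  have := hσ j hj
  conv_lhs => rw [← this]
  simp

theorem BigFix.swap {x y : Fin (n + m)} (hx : (x : ℕ) < n) (hy : (y : ℕ) < n) :
    BigFix n (Equiv.swap x y) := fun j hj =>
  Equiv.swap_apply_of_ne_of_ne (fun h => by subst h; omega) (fun h => by subst h; omega)

end OlshAux

namespace OlshAux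

variable {n m : ℕ}

local notation "G" => Equiv.Perm (Fin (n + m))
local notation "MA" => MonoidAlgebra ℂ (Equiv.Perm (Fin (n + m)))

/-- The generating set of the statement. -/
def Gens (n m : ℕ) : Set (MonoidAlgebra ℂ (Equiv.Perm (Fin (n + m)))) :=
  {a | ∃ σ : Equiv.Perm (Fin (n + m)),
      (∀ j : Fin (n + m), (j : ℕ) < n → σ j = j) ∧
      a = MonoidAlgebra.of ℂ (Equiv.Perm (Fin (n + m))) σ} ∪
    {z | z ∈ lowerGroupAlgebra n m ∧
      ∀ w ∈ lowerGroupAlgebra n m, z * w = w * z} ∪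
    {a | ∃ k : Fin (n + m), n ≤ (k : ℕ) ∧ a = JM (n + m) k}

theorem of_mem_lower {σ : G} (hσ : BigFix n σ) :
    MonoidAlgebra.of ℂ (Equiv.Perm (Fin (n + m))) σ ∈ lowerGroupAlgebra n m :=
  Algebra.subset_adjoin ⟨σ, hσ, rfl⟩

/-- If `x` commutes with all `of σ`, `σ ∈ S_n`, then `x` is in the centralizer. -/
theorem mem_centralizer_of_commute {x : MA}
    (hx : ∀ σ : G, BigFix n σ → (MonoidAlgebra.of ℂ (Equiv.Perm (Fin (n + m))) σ) * x
      = x * (MonoidAlgebra.of ℂ (Equiv.Perm (Fin (n + m))) σ)) :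
    x ∈ Subalgebra.centralizer ℂ
      ((lowerGroupAlgebra n m : Set (MonoidAlgebra ℂ (Equiv.Perm (Fin (n + m)))))) := by
  rw [Subalgebra.mem_centralizer_iff]
  intro w hw
  have hle : lowerGroupAlgebra n m ≤ Subalgebra.centralizer ℂ {x} := by
    apply Algebra.adjoin_le
    rintro a ⟨σ, hσ, rfl⟩
    rw [SetLike.mem_coe, Subalgebra.mem_centralizer_iff]
    rintro g rfl
    exact (hx σ hσ).symm
  have := Subalgebra.mem_centralizer_iff ℂ |>.mp (hle hw) x rfl
  exact this.symm

/-- Coefficientwise invariance of centralizer elements. -/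
theorem centralizer_coeff_invariant {x : MA}
    (hx : x ∈ Subalgebra.centralizer ℂ
      ((lowerGroupAlgebra n m : Set (MonoidAlgebra ℂ (Equiv.Perm (Fin (n + m))))))) 
    {σ : G} (hσ : BigFix n σ) (g : G) :
    x.coeff (σ * g * σ⁻¹) = x.coeff g := by
  have hcomm := Subalgebra.mem_centralizer_iff ℂ |>.mp hx _ (of_mem_lower hσ)
  -- (of σ * x) (σ * g) = x g ; (x * of σ) (σ * g) = x (σ * g * σ⁻¹)
  have := congrArg (fun y : MA => y.coeff (σ * (g * σ⁻¹ * σ))) hcomm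
  simp only [MonoidAlgebra.of_apply, MonoidAlgebra.single_mul_apply,
    MonoidAlgebra.mul_single_apply, one_mul, mul_one] at this
  simpa [mul_assoc] using this.symm

end OlshAux

namespace OlshAux

variable {n m : ℕ}

/-- The set of small letters moved by `g`. -/
def msupp (n : ℕ) {m : ℕ} (g : Equiv.Perm (Fin (n + m))) : Finset (Fin (n + m)) :=
  Finset.univ.filter (fun i => (i : ℕ) < n ∧ g i ≠ i)

/-- Number of small letters moved by `g`. -/
def sstat (n : ℕ) {m : ℕ} (g : Equiv.Perm (Fin (n + m))) : ℕ := (msupp n g).card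

theorem mem_msupp {g : Equiv.Perm (Fin (n + m))} {i : Fin (n + m)} :
    i ∈ msupp n g ↔ (i : ℕ) < n ∧ g i ≠ i := by
  simp [msupp]

theorem sstat_conj {σ g : Equiv.Perm (Fin (n + m))} (hσ : BigFix n σ) :
    sstat n (σ * g * σ⁻¹) = sstat n g := by
  unfold sstat
  apply Finset.card_bij' (fun i _ => σ⁻¹ i) (fun i _ => σ i)
  · intro a ha
    rw [mem_msupp] at ha ⊢
    refine ⟨hσ.inv.small ha.1, fun hc => ha.2 ?_⟩
    have := congrArg σ hc
    simpa using this
  · intro a ha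
    rw [mem_msupp] at ha ⊢
    refine ⟨hσ.small ha.1, fun hc => ha.2 ?_⟩
    simp only [Equiv.Perm.mul_apply] at hc
    simpa using hc
  · intro a _; simp
  · intro a _; simp

theorem sstat_eq_zero_iff {g : Equiv.Perm (Fin (n + m))} :
    sstat n g = 0 ↔ SmallFix n g := by
  unfold sstat
  rw [Finset.card_eq_zero, Finset.eq_empty_iff_forall_notMem]
  constructor
  · intro h j hj
    by_contra hc
    exact h j (mem_msupp.mpr ⟨hj, hc⟩)
  · intro h j hj
    rw [mem_msupp] at hj
    exact hj.2 (h j hj.1)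

end OlshAux

namespace OlshAux

variable {n m : ℕ}

/-- Product of mixed transpositions `(j i, b i)`. -/
def Tprod {r : ℕ} (j b : Fin r → Fin (n + m)) : Equiv.Perm (Fin (n + m)) :=
  (List.ofFn (fun i => Equiv.swap (j i) (b i))).prod

/-- The "small-cycles" permutation built on the letters `a c` along the pattern `es`. -/
def Spart {s : ℕ} (es : List (Fin s × Fin s)) (a : Fin s → Fin (n + m)) :
    Equiv.Perm (Fin (n + m)) :=
  (es.map (fun p => Equiv.swap (a p.1) (a p.2))).prod

/-- The abstract pattern permutation. -/
def S0 {s : ℕ} (es : List (Fin s × Fin s)) : Equiv.Perm (Fin s) :=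
  (es.map (fun p => Equiv.swap p.1 p.2)).prod

/-- The normal form `W = T · κ · S`. -/
def Wp {r s : ℕ} (b : Fin r → Fin (n + m)) (κ : Equiv.Perm (Fin (n + m)))
    (es : List (Fin s × Fin s)) (j : Fin r → Fin (n + m)) (a : Fin s → Fin (n + m)) :
    Equiv.Perm (Fin (n + m)) :=
  Tprod j b * κ * Spart es a

theorem Spart_apply_of_not_mem {s : ℕ} (es : List (Fin s × Fin s))
    {a : Fin s → Fin (n + m)} {x : Fin (n + m)} (hx : ∀ c, a c ≠ x) :
    Spart es a x = x := by
  induction es with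
  | nil => rfl
  | cons p t ih =>
      simp only [Spart, List.map_cons, List.prod_cons, Equiv.Perm.mul_apply]
      rw [show ((t.map (fun p => Equiv.swap (a p.1) (a p.2))).prod : Equiv.Perm (Fin (n+m))) x
          = x from ih, Equiv.swap_apply_of_ne_of_ne (fun h => hx _ h.symm) (fun h => hx _ h.symm)]

theorem Spart_apply {s : ℕ} (es : List (Fin s × Fin s))
    {a : Fin s → Fin (n + m)} (hainj : Function.Injective a) (c : Fin s) :
    Spart es a (a c) = a (S0 es c) := by
  induction es with
  | nil => rfl
  | cons p t ih =>
      simp only [Spart, S0, List.map_cons, List.prod_cons, Equiv.Perm.mul_apply]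
      rw [show ((t.map (fun p => Equiv.swap (a p.1) (a p.2))).prod : Equiv.Perm (Fin (n+m))) (a c)
          = a (S0 t c) from ih]
      exact hainj.swap_apply _ _ _

theorem BigFix.list_prod {l : List (Equiv.Perm (Fin (n + m)))}
    (hl : ∀ σ ∈ l, BigFix n σ) : BigFix n l.prod := by
  induction l with
  | nil => exact BigFix.one
  | cons h t ih =>
      rw [List.prod_cons]
      exact (hl h List.mem_cons_self).mul (ih fun σ hσ => hl σ (List.mem_cons_of_mem _ hσ))

theorem Spart_bigfix {s : ℕ} (es : List (Fin s × Fin s)) {a : Fin s → Fin (n + m)}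
    (ha : ∀ c, ((a c : Fin (n + m)) : ℕ) < n) : BigFix n (Spart es a) := by
  apply BigFix.list_prod
  intro σ hσ
  simp only [List.mem_map] at hσ
  obtain ⟨p, _, rfl⟩ := hσ
  exact BigFix.swap (ha _) (ha _)

end OlshAux

namespace OlshAux

variable {n m : ℕ}

theorem Tprod_nil (j b : Fin 0 → Fin (n + m)) : Tprod j b = 1 := rfl

theorem Tprod_succ {r : ℕ} (j b : Fin (r + 1) → Fin (n + m)) :
    Tprod j b = Equiv.swap (j 0) (b 0) * Tprod (fun i => j i.succ) (fun i => b i.succ) := by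
  simp only [Tprod, List.ofFn_succ, List.prod_cons]

theorem Tprod_apply_of_not_mem {r : ℕ} {j b : Fin r → Fin (n + m)} {x : Fin (n + m)}
    (hj : ∀ i, j i ≠ x) (hb : ∀ i, b i ≠ x) : Tprod j b x = x := by
  induction r with
  | zero => rfl
  | succ r ih =>
      rw [Tprod_succ, Equiv.Perm.mul_apply,
        ih (fun i => hj i.succ) (fun i => hb i.succ),
        Equiv.swap_apply_of_ne_of_ne (fun h => hj 0 h.symm) (fun h => hb 0 h.symm)]

theorem Tprod_apply_j {r : ℕ} {j b : Fin r → Fin (n + m)}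
    (hjinj : Function.Injective j) (hjs : ∀ i, ((j i : Fin (n + m)) : ℕ) < n)
    (hbs : ∀ i, n ≤ ((b i : Fin (n + m)) : ℕ)) (i : Fin r) :
    n ≤ ((Tprod j b (j i) : Fin (n + m)) : ℕ) ∨ ∃ i', i' < i ∧ Tprod j b (j i) = j i' := by
  induction r with
  | zero => exact i.elim0
  | succ r ih =>
      rw [Tprod_succ, Equiv.Perm.mul_apply]
      have htinj : Function.Injective (fun i : Fin r => j i.succ) :=
        fun x y h => Fin.succ_injective r (hjinj h)
      rcases Fin.eq_zero_or_eq_succ i with rfl | ⟨ip, rfl⟩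
      · rw [Tprod_apply_of_not_mem
          (fun ii (h : j ii.succ = j 0) => (Fin.succ_ne_zero ii) (hjinj h))
          (fun ii (h : b ii.succ = j 0) => by
            have hval := congrArg Fin.val h
            have := hbs ii.succ; have := hjs 0; omega),
          Equiv.swap_apply_left]
        exact Or.inl (hbs 0)
      · have htail := ih htinj (fun ii => hjs ii.succ) (fun ii => hbs ii.succ) ip
        rcases htail with hbig | ⟨iq, hlt, heq⟩
        · by_cases hvb : Tprod (fun i => j i.succ) (fun i => b i.succ) (j ip.succ) = b 0
          · rw [hvb, Equiv.swap_apply_right]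
            exact Or.inr ⟨0, Fin.succ_pos ip, rfl⟩
          · rw [Equiv.swap_apply_of_ne_of_ne (fun h => by
              have hval := congrArg Fin.val h
              have := hjs 0; omega) hvb]
            exact Or.inl hbig
        · rw [heq, Equiv.swap_apply_of_ne_of_ne
              (fun h => Fin.succ_ne_zero iq (hjinj h))
              (fun h => by
                have hval := congrArg Fin.val h
                have := hbs 0; have := hjs iq.succ; omega)]
          exact Or.inr ⟨iq.succ, Fin.succ_lt_succ_iff.mpr hlt, rfl⟩

end OlshAux

namespace OlshAux

variable {n m : ℕ}

section Wlem

variable {r s : ℕ} {b : Fin r → Fin (n + m)} {κ : Equiv.Perm (Fin (n + m))}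
  {es : List (Fin s × Fin s)} {j : Fin r → Fin (n + m)} {a : Fin s → Fin (n + m)}

theorem Wp_apply_of_not_mem (hκ : SmallFix n κ) (hbs : ∀ i, n ≤ ((b i : Fin (n + m)) : ℕ))
    {x : Fin (n + m)} (hx : (x : ℕ) < n)
    (hxj : ∀ i, j i ≠ x) (hxa : ∀ c, a c ≠ x) : Wp b κ es j a x = x := by
  unfold Wp
  simp only [Equiv.Perm.mul_apply]
  rw [Spart_apply_of_not_mem es hxa, hκ x hx,
    Tprod_apply_of_not_mem hxj (fun i h => by
      have hval := congrArg Fin.val h; have := hbs i; omega)]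

theorem Wp_apply_a (hκ : SmallFix n κ) (hbs : ∀ i, n ≤ ((b i : Fin (n + m)) : ℕ))
    (has : ∀ c, ((a c : Fin (n + m)) : ℕ) < n) (hainj : Function.Injective a)
    (hdisj : ∀ i c, j i ≠ a c) (c : Fin s) :
    Wp b κ es j a (a c) = a (S0 es c) := by
  unfold Wp
  simp only [Equiv.Perm.mul_apply]
  rw [Spart_apply es hainj, hκ _ (has _),
    Tprod_apply_of_not_mem (fun i => hdisj i _) (fun i h => by
      have hval := congrArg Fin.val h; have := hbs i; have := has (S0 es c); omega)]

theorem Wp_moves_a (hκ : SmallFix n κ) (hbs : ∀ i, n ≤ ((b i : Fin (n + m)) : ℕ))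
    (has : ∀ c, ((a c : Fin (n + m)) : ℕ) < n) (hainj : Function.Injective a)
    (hdisj : ∀ i c, j i ≠ a c) (hS0 : ∀ c, S0 es c ≠ c) (c : Fin s) :
    Wp b κ es j a (a c) ≠ a c := by
  rw [Wp_apply_a hκ hbs has hainj hdisj c]
  exact fun h => hS0 c (hainj h)

theorem Wp_moves_j (hκ : SmallFix n κ) (hbs : ∀ i, n ≤ ((b i : Fin (n + m)) : ℕ))
    (hjs : ∀ i, ((j i : Fin (n + m)) : ℕ) < n) (hjinj : Function.Injective j)
    (hdisj : ∀ i c, j i ≠ a c) (i : Fin r) :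
    Wp b κ es j a (j i) ≠ j i := by
  unfold Wp
  simp only [Equiv.Perm.mul_apply]
  rw [Spart_apply_of_not_mem es (fun c h => hdisj i c h.symm), hκ _ (hjs _)]
  rcases Tprod_apply_j hjinj hjs hbs i with hbig | ⟨i', hlt, heq⟩
  · intro h
    have hval := congrArg Fin.val h
    have := hjs i; omega
  · rw [heq]
    intro h
    exact absurd (hjinj h) (ne_of_lt hlt)

theorem msupp_Wp_subset (hκ : SmallFix n κ) (hbs : ∀ i, n ≤ ((b i : Fin (n + m)) : ℕ)) :
    msupp n (Wp b κ es j a) ⊆ Finset.univ.image j ∪ Finset.univ.image a := by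
  intro x hx
  rw [mem_msupp] at hx
  by_contra hmem
  simp only [Finset.mem_union, Finset.mem_image, Finset.mem_univ, true_and, not_or,
    not_exists] at hmem
  exact hx.2 (Wp_apply_of_not_mem hκ hbs hx.1
    (fun i => hmem.1 i) (fun c => hmem.2 c))

theorem msupp_Wp_eq (hκ : SmallFix n κ) (hbs : ∀ i, n ≤ ((b i : Fin (n + m)) : ℕ))
    (hjs : ∀ i, ((j i : Fin (n + m)) : ℕ) < n) (has : ∀ c, ((a c : Fin (n + m)) : ℕ) < n)
    (hjinj : Function.Injective j) (hainj : Function.Injective a)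
    (hdisj : ∀ i c, j i ≠ a c) (hS0 : ∀ c, S0 es c ≠ c) :
    msupp n (Wp b κ es j a) = Finset.univ.image j ∪ Finset.univ.image a := by
  apply Finset.Subset.antisymm (msupp_Wp_subset hκ hbs)
  intro x hx
  simp only [Finset.mem_union, Finset.mem_image, Finset.mem_univ, true_and] at hx
  rw [mem_msupp]
  rcases hx with ⟨i, rfl⟩ | ⟨c, rfl⟩
  · exact ⟨hjs i, Wp_moves_j hκ hbs hjs hjinj hdisj i⟩
  · exact ⟨has c, Wp_moves_a hκ hbs has hainj hdisj hS0 c⟩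

theorem sstat_Wp (hκ : SmallFix n κ) (hbs : ∀ i, n ≤ ((b i : Fin (n + m)) : ℕ))
    (hjs : ∀ i, ((j i : Fin (n + m)) : ℕ) < n) (has : ∀ c, ((a c : Fin (n + m)) : ℕ) < n)
    (hjinj : Function.Injective j) (hainj : Function.Injective a)
    (hdisj : ∀ i c, j i ≠ a c) (hS0 : ∀ c, S0 es c ≠ c) :
    sstat n (Wp b κ es j a) = r + s := by
  unfold sstat
  rw [msupp_Wp_eq hκ hbs hjs has hjinj hainj hdisj hS0,
    Finset.card_union_of_disjoint, Finset.card_image_of_injective _ hjinj,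
    Finset.card_image_of_injective _ hainj, Finset.card_univ, Finset.card_univ,
    Fintype.card_fin, Fintype.card_fin]
  · rw [Finset.disjoint_left]
    rintro x hx hx'
    simp only [Finset.mem_image, Finset.mem_univ, true_and] at hx hx'
    obtain ⟨i, rfl⟩ := hx
    obtain ⟨c, hc⟩ := hx'
    exact hdisj i c hc.symm

theorem mul_swap_eq (h : Equiv.Perm (Fin (n + m))) (x y : Fin (n + m)) :
    h * Equiv.swap x y = Equiv.swap (h x) (h y) * h := by
  rw [Equiv.swap_apply_apply, mul_assoc, inv_mul_cancel, mul_one]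

theorem Tprod_conj {h : Equiv.Perm (Fin (n + m))} (hh : BigFix n h)
    (hbs : ∀ i, n ≤ ((b i : Fin (n + m)) : ℕ)) :
    h * Tprod j b = Tprod (fun i => h (j i)) b * h := by
  induction r with
  | zero => rw [Tprod_nil, Tprod_nil, one_mul, mul_one]
  | succ r ih =>
      rw [Tprod_succ (j := j), Tprod_succ (j := fun i => h (j i)), ← mul_assoc, mul_swap_eq,
        hh (b 0) (hbs 0), mul_assoc, ih (fun i => hbs i.succ), ← mul_assoc]

theorem Spart_conj (h : Equiv.Perm (Fin (n + m))) :
    h * Spart es a = Spart es (fun c => h (a c)) * h := by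
  induction es with
  | nil =>
      simp [Spart]
  | cons p t ih =>
      simp only [Spart, List.map_cons, List.prod_cons] at ih ⊢
      rw [← mul_assoc, mul_swap_eq, mul_assoc, ih, ← mul_assoc]

theorem Wp_conj {h : Equiv.Perm (Fin (n + m))} (hh : BigFix n h) (hκ : SmallFix n κ)
    (hbs : ∀ i, n ≤ ((b i : Fin (n + m)) : ℕ)) :
    h * Wp b κ es j a * h⁻¹ = Wp b κ es (fun i => h (j i)) (fun c => h (a c)) := by
  unfold Wp
  rw [← mul_assoc, ← mul_assoc, Tprod_conj hh hbs, mul_assoc _ h κ, ← hκ.comm hh,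
    ← mul_assoc, mul_assoc _ h (Spart es a), Spart_conj h]
  group

end Wlem

end OlshAux

namespace OlshAux

variable {n m : ℕ}

/-- The moved-small predicate. -/
def Pm (n : ℕ) {m : ℕ} (g : Equiv.Perm (Fin (n + m))) (y : Fin (n + m)) : Prop :=
  (y : ℕ) < n ∧ g y ≠ y

instance {g : Equiv.Perm (Fin (n + m))} : DecidablePred (Pm n g) := fun y => by
  unfold Pm; infer_instance

theorem Pm_iff {g : Equiv.Perm (Fin (n + m))} {y : Fin (n + m)} :
    Pm n g y ↔ (y : ℕ) < n ∧ g y ≠ y := Iff.rfl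

/-- Any two injective small-valued tuples are related by a permutation fixing big letters. -/
theorem exists_bigfix_extend {t : ℕ} {a a' : Fin t → Fin (n + m)}
    (hainj : Function.Injective a) (hainj' : Function.Injective a')
    (has : ∀ c, ((a c : Fin (n + m)) : ℕ) < n) (has' : ∀ c, ((a' c : Fin (n + m)) : ℕ) < n) :
    ∃ h : Equiv.Perm (Fin (n + m)), BigFix n h ∧ ∀ c, h (a c) = a' c := by
  induction t with
  | zero => exact ⟨1, BigFix.one, fun c => c.elim0⟩
  | succ t ih =>
      obtain ⟨h1, hh1, hmap⟩ := ih
        (a := fun c => a c.succ) (a' := fun c => a' c.succ)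
        (fun x y h => Fin.succ_injective t (hainj h))
        (fun x y h => Fin.succ_injective t (hainj' h))
        (fun c => has c.succ) (fun c => has' c.succ)
      refine ⟨Equiv.swap (h1 (a 0)) (a' 0) * h1, (BigFix.swap (hh1.small (has 0)) (has' 0)).mul hh1, ?_⟩
      intro c
      rcases Fin.eq_zero_or_eq_succ c with rfl | ⟨c', rfl⟩
      · simp [Equiv.Perm.mul_apply]
      · simp only [Equiv.Perm.mul_apply, hmap c']
        apply Equiv.swap_apply_of_ne_of_ne
        · intro h
          have h2 : h1 (a c'.succ) = h1 (a 0) := by rw [hmap c', h]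
          exact Fin.succ_ne_zero c' (hainj (h1.injective h2))
        · intro h
          exact Fin.succ_ne_zero c' (hainj' h)

theorem exists_swap_pairs {α : Type*} [DecidableEq α] (l : List (Equiv.Perm α))
    (h : ∀ τ ∈ l, τ.IsSwap) :
    ∃ es : List (α × α), es.map (fun p => Equiv.swap p.1 p.2) = l := by
  induction l with
  | nil => exact ⟨[], rfl⟩
  | cons τ t ih =>
      obtain ⟨es, hes⟩ := ih (fun τ' hτ' => h τ' (List.mem_cons_of_mem _ hτ'))
      obtain ⟨x, y, _, rfl⟩ := h τ List.mem_cons_self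
      exact ⟨(x, y) :: es, by simp [hes]⟩

/-- Every permutation admits a normal-form decomposition `W`. -/
theorem exists_decomp : ∀ (q : ℕ) (g : Equiv.Perm (Fin (n + m))), sstat n g ≤ q →
    ∃ (r s : ℕ) (b : Fin r → Fin (n + m)) (κ : Equiv.Perm (Fin (n + m)))
      (es : List (Fin s × Fin s)) (j : Fin r → Fin (n + m)) (a : Fin s → Fin (n + m)),
      (∀ i, n ≤ ((b i : Fin (n + m)) : ℕ)) ∧ SmallFix n κ ∧ (∀ c, S0 es c ≠ c) ∧
      (∀ i, ((j i : Fin (n + m)) : ℕ) < n) ∧ (∀ c, ((a c : Fin (n + m)) : ℕ) < n) ∧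
      Function.Injective j ∧ Function.Injective a ∧ (∀ i c, j i ≠ a c) ∧
      g = Wp b κ es j a := by
  intro q
  induction q with
  | zero =>
      intro g hg
      have hsf : SmallFix n g := sstat_eq_zero_iff.mp (Nat.le_zero.mp hg)
      refine ⟨0, 0, Fin.elim0, g, [], Fin.elim0, Fin.elim0,
        (fun i => i.elim0), hsf, (fun c => c.elim0), (fun i => i.elim0), (fun c => c.elim0),
        (fun x y h => x.elim0), (fun x y h => x.elim0), (fun i => i.elim0), ?_⟩
      unfold Wp
      rw [Tprod_nil]
      simp [Spart]
  | succ q ih =>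
      intro g hg
      by_cases hA : ∃ x : Fin (n + m), (x : ℕ) < n ∧ g x ≠ x ∧ n ≤ ((g x : Fin (n + m)) : ℕ)
      · -- Case A : peel one mixed transposition.
        obtain ⟨x, hxs, hxm, hgxb⟩ := hA
        set g' := Equiv.swap x (g x) * g with hg'def
        have hg'x : g' x = x := by
          simp [hg'def, Equiv.Perm.mul_apply]
        have hg'apply : ∀ y, g' y = Equiv.swap x (g x) (g y) := fun y => rfl
        have hmsupp : msupp n g' = (msupp n g).erase x := by
          ext y
          rw [mem_msupp, Finset.mem_erase, mem_msupp]
          constructor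
          · rintro ⟨hys, hym⟩
            have hyx : y ≠ x := fun h => hym (by rw [h, hg'x])
            refine ⟨hyx, hys, fun hfix => ?_⟩
            apply hym
            rw [hg'apply, hfix]
            apply Equiv.swap_apply_of_ne_of_ne hyx
            intro h
            have := congrArg Fin.val h
            omega
          · rintro ⟨hyx, hys, hym⟩
            refine ⟨hys, fun hfix => ?_⟩
            rw [hg'apply] at hfix
            by_cases h1 : g y = x
            · rw [h1, Equiv.swap_apply_left] at hfix
              have := congrArg Fin.val hfix
              omega
            · by_cases h2 : g y = g x
              · exact hyx (g.injective h2)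
              · rw [Equiv.swap_apply_of_ne_of_ne h1 h2] at hfix
                exact hym hfix
        have hxmem : x ∈ msupp n g := mem_msupp.mpr ⟨hxs, hxm⟩
        have hstat' : sstat n g' ≤ q := by
          unfold sstat
          rw [hmsupp, Finset.card_erase_of_mem hxmem]
          unfold sstat at hg
          omega
        obtain ⟨r, s, b, κ, es, j, a, hbs, hκ, hS0, hjs, has, hjinj, hainj, hdisj, hW⟩ :=
          ih g' hstat'
        -- x is fixed by g' hence not in the ranges of j, a
        have hxj : ∀ i, j i ≠ x := by
          intro i hc
          have := Wp_moves_j (es := es) (a := a) hκ hbs hjs hjinj hdisj i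
          rw [← hW, hc] at this
          exact this hg'x
        have hxa : ∀ c, a c ≠ x := by
          intro c hc
          have := Wp_moves_a (j := j) hκ hbs has hainj hdisj hS0 c
          rw [← hW, hc] at this
          exact this hg'x
        refine ⟨r + 1, s, Fin.cons (g x) b, κ, es, Fin.cons x j, a, ?_, hκ, hS0, ?_, has,
          ?_, hainj, ?_, ?_⟩
        · intro i
          rcases Fin.eq_zero_or_eq_succ i with rfl | ⟨i', rfl⟩
          · simpa using hgxb
          · simpa using hbs i'
        · intro i
          rcases Fin.eq_zero_or_eq_succ i with rfl | ⟨i', rfl⟩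
          · simpa using hxs
          · simpa using hjs i'
        · intro y z h
          rcases Fin.eq_zero_or_eq_succ y with rfl | ⟨y', rfl⟩ <;>
            rcases Fin.eq_zero_or_eq_succ z with rfl | ⟨z', rfl⟩
          · rfl
          · rw [Fin.cons_zero, Fin.cons_succ] at h
            exact absurd h.symm (hxj z')
          · rw [Fin.cons_zero, Fin.cons_succ] at h
            exact absurd h (hxj y')
          · rw [Fin.cons_succ, Fin.cons_succ] at h
            rw [hjinj h]
        · intro i c
          rcases Fin.eq_zero_or_eq_succ i with rfl | ⟨i', rfl⟩
          · rw [Fin.cons_zero]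
            exact fun h => hxa c h.symm
          · rw [Fin.cons_succ]
            exact hdisj i' c
        · have hTsucc : Tprod (Fin.cons x j) (Fin.cons (g x) b)
              = Equiv.swap x (g x) * Tprod j b := by
            rw [Tprod_succ]
            simp only [Fin.cons_zero, Fin.cons_succ]
          have hgg : g = Equiv.swap x (g x) * g' := by
            rw [hg'def, ← mul_assoc, Equiv.swap_mul_self, one_mul]
          have hgoal : Equiv.swap x (g x) * g'
              = Wp (Fin.cons (g x) b) κ es (Fin.cons x j) a := by
            rw [hW]
            unfold Wp
            rw [hTsucc]
            group
          exact hgg.trans hgoal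
      · -- Case B : every moved small letter has a small image.
        push_neg at hA
        have hB : ∀ x : Fin (n + m), (x : ℕ) < n → g x ≠ x → ((g x : Fin (n + m)) : ℕ) < n :=
          fun x hxs hxm => hA x hxs hxm
        have hstab : ∀ x : Fin (n + m), (x : ℕ) < n → ((g x : Fin (n + m)) : ℕ) < n := by
          intro x hxs
          by_cases hxm : g x = x
          · rw [hxm]; exact hxs
          · exact hB x hxs hxm
        have hbig : ∀ x : Fin (n + m), n ≤ (x : ℕ) → n ≤ ((g x : Fin (n + m)) : ℕ) := by
          intro x hxb
          by_contra hc
          push_neg at hc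
          set SF : Finset (Fin (n + m)) := Finset.univ.filter (fun y => (y : ℕ) < n) with hSF
          have himg : SF.image g ⊆ SF := by
            intro y hy
            simp only [hSF, Finset.mem_image, Finset.mem_filter, Finset.mem_univ,
              true_and] at hy ⊢
            obtain ⟨z, hz, rfl⟩ := hy
            exact hstab z hz
          have hcard : (SF.image g).card = SF.card :=
            Finset.card_image_of_injective _ g.injective
          have heq : SF.image g = SF := Finset.eq_of_subset_of_card_le himg (le_of_eq hcard.symm)
          have : g x ∈ SF := by
            simp only [hSF, Finset.mem_filter, Finset.mem_univ, true_and]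
            exact hc
          rw [← heq] at this
          simp only [Finset.mem_image] at this
          obtain ⟨z, hz, hzx⟩ := this
          have := g.injective hzx
          subst this
          simp only [hSF, Finset.mem_filter, Finset.mem_univ, true_and] at hz
          omega
        -- the permutation p-stability
        have hp : ∀ x : Fin (n + m), Pm n g x ↔ Pm n g (g x) := by
          intro x
          unfold Pm
          constructor
          · rintro ⟨hxs, hxm⟩
            exact ⟨hB x hxs hxm, fun h => hxm (g.injective h)⟩
          · rintro ⟨hgs, hgm⟩
            have hxm : g x ≠ x := fun h => hgm (by rw [h]; exact h)
            refine ⟨?_, hxm⟩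
            by_contra hxb
            push_neg at hxb
            have := hbig x hxb
            omega
        set σ : Equiv.Perm (Fin (n + m)) :=
          Equiv.Perm.ofSubtype (g.subtypePerm (fun x => (hp x).symm)) with hσdef
        have hσ_mem : ∀ x : Fin (n + m), Pm n g x → σ x = g x := by
          intro x hx
          rw [hσdef]
          exact Equiv.Perm.ofSubtype_apply_of_mem _ hx
        have hσ_not : ∀ x : Fin (n + m), ¬ Pm n g x → σ x = x := by
          intro x hx
          rw [hσdef]
          exact Equiv.Perm.ofSubtype_apply_of_not_mem _ hx
        have hσbig : BigFix n σ := by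
          intro x hxb
          exact hσ_not x (fun h => by have := h.1; omega)
        set κ : Equiv.Perm (Fin (n + m)) := σ⁻¹ * g with hκdef
        have hκs : SmallFix n κ := by
          intro x hxs
          by_cases hxm : g x = x
          · have hσx : σ x = x := hσ_not x (fun h => h.2 hxm)
            rw [hκdef]
            simp only [Equiv.Perm.mul_apply, hxm]
            conv_lhs => rw [← hσx]
            simp
          · have hσx : σ x = g x := hσ_mem x ⟨hxs, hxm⟩
            rw [hκdef]
            simp only [Equiv.Perm.mul_apply]
            conv_lhs => rw [← hσx]
            simp
        have hgσκ : g = κ * σ := by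
          have h1 : g = σ * κ := by rw [hκdef, ← mul_assoc, mul_inv_cancel, one_mul]
          rw [h1, hκs.comm hσbig]
        -- enumerate the moved small letters
        set M : Finset (Fin (n + m)) := msupp n g with hMdef
        set s : ℕ := M.card with hsdef
        set e : Fin s ≃o {x // x ∈ M} := M.orderIsoOfFin rfl with hedef
        set a : Fin s → Fin (n + m) := fun c => (e c : Fin (n + m)) with hadef
        have hainj : Function.Injective a := by
          intro x y h
          have : e x = e y := Subtype.ext h
          exact e.injective this
        have haM : ∀ c, a c ∈ M := fun c => (e c).2
        have has : ∀ c, ((a c : Fin (n + m)) : ℕ) < n := fun c => (mem_msupp.mp (haM c)).1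
        have hsurj : ∀ x ∈ M, ∃ c, a c = x := by
          intro x hx
          exact ⟨e.symm ⟨x, hx⟩, by simp [hadef]⟩
        have hσM : ∀ x : Fin (n + m), x ∈ M ↔ σ x ∈ M := by
          intro x
          rw [hMdef, mem_msupp, mem_msupp, ← Pm_iff, ← Pm_iff]
          constructor
          · intro hx
            rw [hσ_mem x hx]
            exact (hp x).mp hx
          · intro hx
            by_contra hc
            rw [hσ_not x hc] at hx
            exact hc hx
        set π : Equiv.Perm (Fin s) :=
          (e.toEquiv.trans (σ.subtypePerm (fun x => (hσM x).symm))).trans e.toEquiv.symm with hπdef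
        have hπ_apply : ∀ c, a (π c) = σ (a c) := by
          intro c
          simp only [hπdef, hadef, Equiv.trans_apply]
          rw [show (e.toEquiv.symm ((σ.subtypePerm (fun x => (hσM x).symm)) (e.toEquiv c)))
              = (e.symm ((σ.subtypePerm (fun x => (hσM x).symm)) (e c))) from rfl]
          have : (e (e.symm ((σ.subtypePerm (fun x => (hσM x).symm)) (e c))) : Fin (n + m))
              = (((σ.subtypePerm (fun x => (hσM x).symm)) (e c)) : Fin (n + m)) := by
            rw [OrderIso.apply_symm_apply]
          rw [this]
          rfl
        have hπ_ne : ∀ c, π c ≠ c := by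
          intro c hc
          have := hπ_apply c
          rw [hc] at this
          have hmem := haM c
          rw [hMdef, mem_msupp, ← Pm_iff] at hmem
          rw [hσ_mem _ hmem] at this
          exact hmem.2 this.symm
        -- swap factorisation of π
        obtain ⟨l, hlprod, hlswap⟩ := (Equiv.Perm.truncSwapFactors π).out
        obtain ⟨es, hes⟩ := exists_swap_pairs l hlswap
        have hS0 : S0 es = π := by rw [S0, hes, hlprod]
        have hSpart : Spart es a = σ := by
          apply Equiv.ext
          intro x
          by_cases hx : x ∈ M
          · obtain ⟨c, rfl⟩ := hsurj x hx
            rw [Spart_apply es hainj, hS0, hπ_apply]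
          · rw [Spart_apply_of_not_mem es (fun c h => hx (by rw [← h]; exact haM c)),
              hσ_not x (fun h => hx (by rw [hMdef, mem_msupp, ← Pm_iff]; exact h))]
        refine ⟨0, s, Fin.elim0, κ, es, Fin.elim0, a, (fun i => i.elim0), hκs,
          ?_, (fun i => i.elim0), has, (fun x y h => x.elim0), hainj, (fun i => i.elim0), ?_⟩
        · intro c
          rw [hS0]
          exact hπ_ne c
        · rw [hgσκ]
          unfold Wp
          rw [Tprod_nil, hSpart, one_mul]

end OlshAux

namespace OlshAux

variable {n m : ℕ}

/-- The useful part `X_b = Σ_{i<n} (i,b)` of the Jucys–Murphy element. -/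
noncomputable def Xel (n m : ℕ) (bb : Fin (n + m)) :
    MonoidAlgebra ℂ (Equiv.Perm (Fin (n + m))) :=
  ∑ i ∈ Finset.univ.filter (fun i : Fin (n + m) => (i : ℕ) < n),
    MonoidAlgebra.of ℂ (Equiv.Perm (Fin (n + m))) (Equiv.swap i bb)

theorem of_smallfix_mem {κ : Equiv.Perm (Fin (n + m))} (hκ : SmallFix n κ) :
    MonoidAlgebra.of ℂ (Equiv.Perm (Fin (n + m))) κ ∈ Algebra.adjoin ℂ (Gens n m) :=
  Algebra.subset_adjoin (Or.inl (Or.inl ⟨κ, hκ, rfl⟩))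

theorem JM_mem {k : Fin (n + m)} (hk : n ≤ (k : ℕ)) :
    JM (n + m) k ∈ Algebra.adjoin ℂ (Gens n m) :=
  Algebra.subset_adjoin (Or.inr ⟨k, hk, rfl⟩)

theorem Xel_mem {bb : Fin (n + m)} (hbb : n ≤ (bb : ℕ)) :
    Xel n m bb ∈ Algebra.adjoin ℂ (Gens n m) := by
  have hsplit : JM (n + m) bb = Xel n m bb +
      ∑ i ∈ Finset.univ.filter (fun i : Fin (n + m) => n ≤ (i : ℕ) ∧ i < bb),
        MonoidAlgebra.of ℂ (Equiv.Perm (Fin (n + m))) (Equiv.swap i bb) := by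
    unfold JM Xel
    rw [← Finset.sum_filter_add_sum_filter_not
      (Finset.univ.filter (fun i : Fin (n + m) => i < bb)) (fun i => (i : ℕ) < n)]
    congr 1
    · congr 1
      ext i
      simp only [Finset.mem_filter, Finset.mem_univ, true_and]
      rw [Fin.lt_def]
      omega
    · congr 1
      ext i
      simp only [Finset.mem_filter, Finset.mem_univ, true_and]
      omega
  have hrest : ∑ i ∈ Finset.univ.filter (fun i : Fin (n + m) => n ≤ (i : ℕ) ∧ i < bb),
      MonoidAlgebra.of ℂ (Equiv.Perm (Fin (n + m))) (Equiv.swap i bb)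
      ∈ Algebra.adjoin ℂ (Gens n m) := by
    apply Subalgebra.sum_mem
    intro i hi
    simp only [Finset.mem_filter, Finset.mem_univ, true_and] at hi
    exact of_smallfix_mem (fun y hy => Equiv.swap_apply_of_ne_of_ne
      (fun h => by subst h; omega) (fun h => by subst h; omega))
  have : Xel n m bb = JM (n + m) bb -
      ∑ i ∈ Finset.univ.filter (fun i : Fin (n + m) => n ≤ (i : ℕ) ∧ i < bb),
        MonoidAlgebra.of ℂ (Equiv.Perm (Fin (n + m))) (Equiv.swap i bb) := by
    rw [hsplit, add_sub_cancel_right]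
  rw [this]
  exact Subalgebra.sub_mem _ (JM_mem hbb) hrest

/-- The sum over injective small tuples of the small-cycle permutations: a central element. -/
noncomputable def zshape {s : ℕ} (n m : ℕ) (es : List (Fin s × Fin s)) :
    MonoidAlgebra ℂ (Equiv.Perm (Fin (n + m))) :=
  ∑ a ∈ Finset.univ.filter (fun a : Fin s → Fin (n + m) =>
      Function.Injective a ∧ ∀ c, ((a c : Fin (n + m)) : ℕ) < n),
    MonoidAlgebra.of ℂ (Equiv.Perm (Fin (n + m))) (Spart es a)

theorem zshape_mem_lower {s : ℕ} (es : List (Fin s × Fin s)) :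
    zshape n m es ∈ lowerGroupAlgebra n m := by
  apply Subalgebra.sum_mem
  intro a ha
  simp only [Finset.mem_filter, Finset.mem_univ, true_and] at ha
  exact of_mem_lower (Spart_bigfix es ha.2)

theorem zshape_comm {s : ℕ} (es : List (Fin s × Fin s)) {h : Equiv.Perm (Fin (n + m))}
    (hh : BigFix n h) :
    MonoidAlgebra.of ℂ (Equiv.Perm (Fin (n + m))) h * zshape n m es
      = zshape n m es * MonoidAlgebra.of ℂ (Equiv.Perm (Fin (n + m))) h := by
  unfold zshape
  rw [Finset.mul_sum, Finset.sum_mul]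
  have key : ∀ a : Fin s → Fin (n + m),
      MonoidAlgebra.of ℂ (Equiv.Perm (Fin (n + m))) h
        * MonoidAlgebra.of ℂ (Equiv.Perm (Fin (n + m))) (Spart es a)
      = MonoidAlgebra.of ℂ (Equiv.Perm (Fin (n + m))) (Spart es (fun c => h (a c)))
        * MonoidAlgebra.of ℂ (Equiv.Perm (Fin (n + m))) h := by
    intro a
    rw [← map_mul, ← map_mul, Spart_conj]
  apply Finset.sum_nbij' (i := fun a => (fun c => h (a c))) (j := fun a => (fun c => h⁻¹ (a c)))
  · intro a ha
    simp only [Finset.mem_filter, Finset.mem_univ, true_and] at ha ⊢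
    exact ⟨fun x y hxy => ha.1 (h.injective hxy), fun c => hh.small (ha.2 c)⟩
  · intro a ha
    simp only [Finset.mem_filter, Finset.mem_univ, true_and] at ha ⊢
    exact ⟨fun x y hxy => ha.1 (h⁻¹.injective hxy), fun c => hh.inv.small (ha.2 c)⟩
  · intro a _
    funext c
    simp
  · intro a _
    funext c
    simp
  · intro a _
    exact key a

theorem zshape_mem {s : ℕ} (es : List (Fin s × Fin s)) :
    zshape n m es ∈ Algebra.adjoin ℂ (Gens n m) := by
  apply Algebra.subset_adjoin
  apply Or.inl
  apply Or.inr
  refine ⟨zshape_mem_lower es, ?_⟩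
  intro w hw
  have hcent := mem_centralizer_of_commute (x := zshape n m es)
    (fun σ hσ => zshape_comm es hσ)
  have := Subalgebra.mem_centralizer_iff ℂ |>.mp hcent w hw
  exact this.symm

end OlshAux

namespace OlshAux

variable {n m : ℕ}

/-- Tuples of small letters. -/
def JT (n m r : ℕ) : Finset (Fin r → Fin (n + m)) :=
  Finset.univ.filter (fun j => ∀ i, ((j i : Fin (n + m)) : ℕ) < n)

/-- Injective tuples of small letters. -/
def AT (n m s : ℕ) : Finset (Fin s → Fin (n + m)) :=
  Finset.univ.filter (fun a : Fin s → Fin (n + m) =>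
    Function.Injective a ∧ ∀ c, ((a c : Fin (n + m)) : ℕ) < n)

theorem zshape_eq {s : ℕ} (es : List (Fin s × Fin s)) :
    zshape n m es = ∑ a ∈ AT n m s,
      MonoidAlgebra.of ℂ (Equiv.Perm (Fin (n + m))) (Spart es a) := rfl

noncomputable def Xprod {r : ℕ} (n m : ℕ) (b : Fin r → Fin (n + m)) :
    MonoidAlgebra ℂ (Equiv.Perm (Fin (n + m))) :=
  (List.ofFn (fun i => Xel n m (b i))).prod

theorem Xprod_mem {r : ℕ} {b : Fin r → Fin (n + m)} (hbs : ∀ i, n ≤ ((b i : Fin (n + m)) : ℕ)) :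
    Xprod n m b ∈ Algebra.adjoin ℂ (Gens n m) := by
  apply Subalgebra.list_prod_mem
  intro x hx
  simp only [Xprod, List.mem_ofFn] at hx
  obtain ⟨i, rfl⟩ := hx
  exact Xel_mem (hbs i)

theorem Xprod_expand {r : ℕ} (b : Fin r → Fin (n + m)) :
    Xprod n m b = ∑ j ∈ JT n m r,
      MonoidAlgebra.of ℂ (Equiv.Perm (Fin (n + m))) (Tprod j b) := by
  induction r with
  | zero =>
      have hJT : JT n m 0 = Finset.univ := Finset.filter_true_of_mem (fun j _ => fun i => i.elim0)
      rw [hJT, Finset.univ_unique, Finset.sum_singleton]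
      show (1 : MonoidAlgebra ℂ (Equiv.Perm (Fin (n + m)))) = _
      rw [Tprod_nil, map_one]
  | succ r ih =>
      have hXsucc : Xprod n m b = Xel n m (b 0) * Xprod n m (fun i => b i.succ) := by
        simp only [Xprod, List.ofFn_succ, List.prod_cons]
      rw [hXsucc, ih, Xel]
      rw [Finset.sum_mul_sum]
      have hprod : ∑ j ∈ JT n m (r + 1),
          MonoidAlgebra.of ℂ (Equiv.Perm (Fin (n + m))) (Tprod j b)
          = ∑ p ∈ (Finset.univ.filter (fun i : Fin (n + m) => (i : ℕ) < n)) ×ˢ JT n m r,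
            MonoidAlgebra.of ℂ (Equiv.Perm (Fin (n + m))) (Tprod (Fin.cons p.1 p.2) b) := by
        apply Finset.sum_nbij' (i := fun j => (j 0, fun i => j i.succ))
          (j := fun p => Fin.cons p.1 p.2)
        · intro j hj
          simp only [JT, Finset.mem_product, Finset.mem_filter, Finset.mem_univ, true_and] at hj ⊢
          exact ⟨hj 0, fun i => hj i.succ⟩
        · intro p hp
          simp only [JT, Finset.mem_product, Finset.mem_filter, Finset.mem_univ, true_and] at hp ⊢
          intro i
          rcases Fin.eq_zero_or_eq_succ i with rfl | ⟨i', rfl⟩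
          · simpa using hp.1
          · simpa using hp.2 i'
        · intro j _
          exact Fin.cons_self_tail j
        · intro p _
          simp
        · intro j _
          exact congrArg _ (congrArg (fun jj => Tprod jj b) (Fin.cons_self_tail j).symm)
      rw [hprod, Finset.sum_product]
      apply Finset.sum_congr rfl
      intro x _
      apply Finset.sum_congr rfl
      intro jt _
      rw [← map_mul]
      congr 1
      rw [Tprod_succ]
      simp only [Fin.cons_zero, Fin.cons_succ]

theorem coeff_sum {ι : Type*} [DecidableEq ι] (S : Finset ι)
    (f : ι → Equiv.Perm (Fin (n + m))) (τ : Equiv.Perm (Fin (n + m))) :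
    ((∑ p ∈ S, MonoidAlgebra.of ℂ (Equiv.Perm (Fin (n + m))) (f p)) :
        MonoidAlgebra ℂ (Equiv.Perm (Fin (n + m)))).coeff τ
      = ((S.filter (fun p => f p = τ)).card : ℂ) := by
  rw [MonoidAlgebra.coeff_sum, Finsupp.finset_sum_apply]
  rw [Finset.card_filter]
  push_cast
  apply Finset.sum_congr rfl
  intro p _
  simp [MonoidAlgebra.of_apply, MonoidAlgebra.coeff_single, Finsupp.single_apply, eq_comm]

/-- The main product: an element of the adjoined algebra expanding as a sum of `W`'s. -/
theorem Q_expand {r s : ℕ} (b : Fin r → Fin (n + m)) (κ : Equiv.Perm (Fin (n + m)))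
    (es : List (Fin s × Fin s)) :
    Xprod n m b * MonoidAlgebra.of ℂ (Equiv.Perm (Fin (n + m))) κ * zshape n m es
      = ∑ p ∈ JT n m r ×ˢ AT n m s,
        MonoidAlgebra.of ℂ (Equiv.Perm (Fin (n + m))) (Wp b κ es p.1 p.2) := by
  rw [Xprod_expand, zshape_eq, Finset.sum_mul, Finset.sum_mul, Finset.sum_product]
  apply Finset.sum_congr rfl
  intro j _
  rw [Finset.mul_sum]
  apply Finset.sum_congr rfl
  intro a _
  rw [← map_mul, ← map_mul]
  rfl

end OlshAux

namespace OlshAux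

variable {n m : ℕ}

theorem JM_comm {k : Fin (n + m)} (hk : n ≤ (k : ℕ)) {h : Equiv.Perm (Fin (n + m))}
    (hh : BigFix n h) :
    MonoidAlgebra.of ℂ (Equiv.Perm (Fin (n + m))) h * JM (n + m) k
      = JM (n + m) k * MonoidAlgebra.of ℂ (Equiv.Perm (Fin (n + m))) h := by
  unfold JM
  rw [Finset.mul_sum, Finset.sum_mul]
  have hkfix : h k = k := hh k hk
  have key : ∀ x : Fin (n + m),
      MonoidAlgebra.of ℂ (Equiv.Perm (Fin (n + m))) h
        * MonoidAlgebra.of ℂ (Equiv.Perm (Fin (n + m))) (Equiv.swap x k)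
      = MonoidAlgebra.of ℂ (Equiv.Perm (Fin (n + m))) (Equiv.swap (h x) k)
        * MonoidAlgebra.of ℂ (Equiv.Perm (Fin (n + m))) h := by
    intro x
    rw [← map_mul, ← map_mul, mul_swap_eq, hkfix]
  apply Finset.sum_nbij' (i := fun x => h x) (j := fun x => h⁻¹ x)
  · intro x hx
    simp only [Finset.mem_filter, Finset.mem_univ, true_and] at hx ⊢
    rw [Fin.lt_def] at hx ⊢
    by_cases hxs : (x : ℕ) < n
    · have := hh.small hxs; omega
    · rw [hh x (le_of_not_gt hxs)]; exact hx
  · intro x hx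
    simp only [Finset.mem_filter, Finset.mem_univ, true_and] at hx ⊢
    rw [Fin.lt_def] at hx ⊢
    by_cases hxs : (x : ℕ) < n
    · have := hh.inv.small hxs; omega
    · rw [hh.inv x (le_of_not_gt hxs)]; exact hx
  · intro x _; simp
  · intro x _; simp
  · intro x _; exact key x

/-- The easy inclusion: the generators centralize `ℂ[S_n]`. -/
theorem adjoin_le_centralizer :
    Algebra.adjoin ℂ (Gens n m) ≤ Subalgebra.centralizer ℂ
      ((lowerGroupAlgebra n m : Set (MonoidAlgebra ℂ (Equiv.Perm (Fin (n + m)))))) := by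
  apply Algebra.adjoin_le
  rintro x ((h | h) | h)
  · obtain ⟨σ, hσ, rfl⟩ := h
    apply mem_centralizer_of_commute
    intro τ hτ
    rw [← map_mul, ← map_mul, (show SmallFix n σ from hσ).comm hτ]
  · exact mem_centralizer_of_commute (fun τ hτ => by
      have := h.2 _ (of_mem_lower hτ)
      exact this.symm)
  · obtain ⟨k, hk, rfl⟩ := h
    exact mem_centralizer_of_commute (fun τ hτ => JM_comm hk hτ)

end OlshAux

namespace OlshAux

variable {n m : ℕ}

theorem exists_bigfix_extend2 {t u : ℕ} {j j' : Fin t → Fin (n + m)} {a a' : Fin u → Fin (n + m)}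
    (hjinj : Function.Injective j) (hainj : Function.Injective a)
    (hdisj : ∀ i c, j i ≠ a c)
    (hjs : ∀ i, ((j i : Fin (n + m)) : ℕ) < n) (has : ∀ c, ((a c : Fin (n + m)) : ℕ) < n)
    (hjinj' : Function.Injective j') (hainj' : Function.Injective a')
    (hdisj' : ∀ i c, j' i ≠ a' c)
    (hjs' : ∀ i, ((j' i : Fin (n + m)) : ℕ) < n) (has' : ∀ c, ((a' c : Fin (n + m)) : ℕ) < n) :
    ∃ h : Equiv.Perm (Fin (n + m)), BigFix n h ∧ (∀ i, h (j i) = j' i) ∧ (∀ c, h (a c) = a' c) := by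
  have happmem : ∀ (jj : Fin t → Fin (n + m)) (aa : Fin u → Fin (n + m))
      (hj2 : Function.Injective jj) (ha2 : Function.Injective aa)
      (hd2 : ∀ i c, jj i ≠ aa c), Function.Injective (Fin.append jj aa) := by
    intro jj aa hj2 ha2 hd2 x y hxy
    induction x using Fin.addCases with
    | left i =>
        induction y using Fin.addCases with
        | left i2 =>
            rw [Fin.append_left, Fin.append_left] at hxy
            rw [hj2 hxy]
        | right c =>
            rw [Fin.append_left, Fin.append_right] at hxy
            exact absurd hxy (hd2 _ _)
    | right c =>
        induction y using Fin.addCases with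
        | left i2 =>
            rw [Fin.append_right, Fin.append_left] at hxy
            exact absurd hxy.symm (hd2 _ _)
        | right c2 =>
            rw [Fin.append_right, Fin.append_right] at hxy
            rw [ha2 hxy]
  have hsmall : ∀ (jj : Fin t → Fin (n + m)) (aa : Fin u → Fin (n + m))
      (hjs2 : ∀ i, ((jj i : Fin (n + m)) : ℕ) < n) (has2 : ∀ c, ((aa c : Fin (n + m)) : ℕ) < n)
      (d : Fin (t + u)), ((Fin.append jj aa d : Fin (n + m)) : ℕ) < n := by
    intro jj aa hjs2 has2 d
    induction d using Fin.addCases with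
    | left i => rw [Fin.append_left]; exact hjs2 i
    | right c => rw [Fin.append_right]; exact has2 c
  obtain ⟨h, hh, hmap⟩ := exists_bigfix_extend
    (happmem j a hjinj hainj hdisj) (happmem j' a' hjinj' hainj' hdisj')
    (hsmall j a hjs has) (hsmall j' a' hjs' has')
  refine ⟨h, hh, fun i => ?_, fun c => ?_⟩
  · have := hmap (Fin.castAdd u i)
    rwa [Fin.append_left, Fin.append_left] at this
  · have := hmap (Fin.natAdd t c)
    rwa [Fin.append_right, Fin.append_right] at this

end OlshAux

namespace OlshAux

variable {n m : ℕ}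

theorem base_case {x : MonoidAlgebra ℂ (Equiv.Perm (Fin (n + m)))}
    (hsupp : ∀ g ∈ x.coeff.support, SmallFix n g) : x ∈ Algebra.adjoin ℂ (Gens n m) := by
  have hx : x = ∑ g ∈ x.coeff.support, MonoidAlgebra.single g (x.coeff g) := (MonoidAlgebra.sum_coeff_single x).symm
  rw [hx]
  apply Subalgebra.sum_mem
  intro g hg
  have : MonoidAlgebra.single g (x.coeff g) = (x.coeff g) • MonoidAlgebra.of ℂ (Equiv.Perm (Fin (n + m))) g := by
    rw [MonoidAlgebra.smul_of]
  rw [this]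
  exact Subalgebra.smul_mem _ (of_smallfix_mem (hsupp g hg)) _

theorem centralizer_le_adjoin_aux : ∀ (q k : ℕ) (x : MonoidAlgebra ℂ (Equiv.Perm (Fin (n + m)))),
    x ∈ Subalgebra.centralizer ℂ
      ((lowerGroupAlgebra n m : Set (MonoidAlgebra ℂ (Equiv.Perm (Fin (n + m)))))) →
    (∀ g ∈ x.coeff.support, sstat n g ≤ q) →
    ((x.coeff.support.filter (fun g => sstat n g = q)).card ≤ k) →
    x ∈ Algebra.adjoin ℂ (Gens n m) := by
  intro q
  induction q with
  | zero =>
      intro k x hC hsupp _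
      exact base_case (fun g hg => sstat_eq_zero_iff.mp (Nat.le_zero.mp (hsupp g hg)))
  | succ q ihq =>
      intro k
      induction k with
      | zero =>
          intro x hC hsupp hcard
          have hempty : x.coeff.support.filter (fun g => sstat n g = q + 1) = ∅ :=
            Finset.card_eq_zero.mp (Nat.le_zero.mp hcard)
          apply ihq (x.coeff.support.filter (fun g => sstat n g = q)).card x hC _ le_rfl
          intro g hg
          have h1 := hsupp g hg
          have h2 : sstat n g ≠ q + 1 := by
            intro hc
            have : g ∈ x.coeff.support.filter (fun g => sstat n g = q + 1) :=
              Finset.mem_filter.mpr ⟨hg, hc⟩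
            rw [hempty] at this
            exact absurd this (Finset.notMem_empty g)
          omega
      | succ k ihk =>
          intro x hC hsupp hcard
          by_cases hF : x.coeff.support.filter (fun g => sstat n g = q + 1) = ∅
          · apply ihq (x.coeff.support.filter (fun g => sstat n g = q)).card x hC _ le_rfl
            intro g hg
            have h1 := hsupp g hg
            have h2 : sstat n g ≠ q + 1 := by
              intro hc
              have : g ∈ x.coeff.support.filter (fun g => sstat n g = q + 1) :=
                Finset.mem_filter.mpr ⟨hg, hc⟩
              rw [hF] at this
              exact absurd this (Finset.notMem_empty g)
            omega
          · obtain ⟨g, hgmem⟩ := Finset.nonempty_of_ne_empty hF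
            have hgsupp : g ∈ x.coeff.support := (Finset.mem_filter.mp hgmem).1
            have hgstat : sstat n g = q + 1 := (Finset.mem_filter.mp hgmem).2
            obtain ⟨r, s, b, κ, es, j0, a0, hbs, hκ, hS0, hjs, has, hjinj, hainj, hdisj, hW⟩ :=
              exists_decomp (sstat n g) g le_rfl
            have hrs : r + s = q + 1 := by
              rw [← sstat_Wp hκ hbs hjs has hjinj hainj hdisj hS0, ← hW, hgstat]
            set Qel : MonoidAlgebra ℂ (Equiv.Perm (Fin (n + m))) :=
              Xprod n m b * MonoidAlgebra.of ℂ (Equiv.Perm (Fin (n + m))) κ * zshape n m es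
              with hQdef
            have hQmem : Qel ∈ Algebra.adjoin ℂ (Gens n m) :=
              mul_mem (mul_mem (Xprod_mem hbs) (of_smallfix_mem hκ)) (zshape_mem es)
            have hQcoeff : ∀ τ : Equiv.Perm (Fin (n + m)), Qel.coeff τ =
                (((JT n m r ×ˢ AT n m s).filter
                  (fun p => Wp b κ es p.1 p.2 = τ)).card : ℂ) := by
              intro τ
              rw [hQdef, Q_expand]
              exact coeff_sum _ _ τ
            have hp0mem : (j0, a0) ∈ JT n m r ×ˢ AT n m s := by
              rw [Finset.mem_product]
              constructor
              · simp only [JT, Finset.mem_filter, Finset.mem_univ, true_and]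
                exact hjs
              · simp only [AT, Finset.mem_filter, Finset.mem_univ, true_and]
                exact ⟨hainj, has⟩
            have hQg : Qel.coeff g ≠ 0 := by
              rw [hQcoeff]
              rw [Nat.cast_ne_zero]
              apply Finset.card_ne_zero_of_mem (a := (j0, a0))
              rw [Finset.mem_filter]
              exact ⟨hp0mem, hW.symm⟩
            -- every group element appearing in Qel has sstat ≤ q + 1,
            -- and those with sstat exactly q+1 are conjugates of g with equal coefficient
            have hK1 : ∀ τ : Equiv.Perm (Fin (n + m)), Qel.coeff τ ≠ 0 → sstat n τ ≤ q + 1 := by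
              intro τ hτ
              rw [hQcoeff, Nat.cast_ne_zero, ← Nat.pos_iff_ne_zero, Finset.card_pos] at hτ
              obtain ⟨p, hp⟩ := hτ
              rw [Finset.mem_filter] at hp
              obtain ⟨hpmem, hpeq⟩ := hp
              rw [Finset.mem_product] at hpmem
              have hjsp : ∀ i, ((p.1 i : Fin (n + m)) : ℕ) < n := by
                have := hpmem.1
                simp only [JT, Finset.mem_filter, Finset.mem_univ, true_and] at this
                exact this
              calc sstat n τ = (msupp n τ).card := rfl
                _ ≤ (Finset.univ.image p.1 ∪ Finset.univ.image p.2).card := by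
                    apply Finset.card_le_card
                    rw [← hpeq]
                    exact msupp_Wp_subset hκ hbs
                _ ≤ (Finset.univ.image p.1).card + (Finset.univ.image p.2).card :=
                    Finset.card_union_le _ _
                _ ≤ r + s := by
                    have h1 := Finset.card_image_le (s := (Finset.univ : Finset (Fin r))) (f := p.1)
                    have h2 := Finset.card_image_le (s := (Finset.univ : Finset (Fin s))) (f := p.2)
                    simp only [Finset.card_univ, Fintype.card_fin] at h1 h2
                    omega
                _ = q + 1 := hrs
            have hK3 : ∀ τ : Equiv.Perm (Fin (n + m)), sstat n τ = q + 1 → Qel.coeff τ ≠ 0 →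
                ∃ h : Equiv.Perm (Fin (n + m)), BigFix n h ∧ τ = h * g * h⁻¹ := by
              intro τ hτstat hτ
              rw [hQcoeff, Nat.cast_ne_zero, ← Nat.pos_iff_ne_zero, Finset.card_pos] at hτ
              obtain ⟨p, hp⟩ := hτ
              rw [Finset.mem_filter] at hp
              obtain ⟨hpmem, hpeq⟩ := hp
              rw [Finset.mem_product] at hpmem
              have hjsp : ∀ i, ((p.1 i : Fin (n + m)) : ℕ) < n := by
                have := hpmem.1
                simp only [JT, Finset.mem_filter, Finset.mem_univ, true_and] at this
                exact this
              have hasp : (Function.Injective p.2) ∧ ∀ c, ((p.2 c : Fin (n + m)) : ℕ) < n := by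
                have := hpmem.2
                simp only [AT, Finset.mem_filter, Finset.mem_univ, true_and] at this
                exact this
              -- joint injectivity from the sstat count
              have hsub : msupp n τ ⊆ Finset.univ.image p.1 ∪ Finset.univ.image p.2 := by
                rw [← hpeq]
                exact msupp_Wp_subset hκ hbs
              have hcard1 : q + 1 ≤ (Finset.univ.image p.1 ∪ Finset.univ.image p.2).card := by
                rw [← hτstat]
                exact Finset.card_le_card hsub
              have him1 : (Finset.univ.image p.1).card ≤ r := by
                have := Finset.card_image_le (s := (Finset.univ : Finset (Fin r))) (f := p.1)
                simpa using this
              have him2 : (Finset.univ.image p.2).card ≤ s := by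
                have := Finset.card_image_le (s := (Finset.univ : Finset (Fin s))) (f := p.2)
                simpa using this
              have hinter := Finset.card_union_add_card_inter
                (Finset.univ.image p.1) (Finset.univ.image p.2)
              have hub := Finset.card_union_le
                (Finset.univ.image p.1) (Finset.univ.image p.2)
              have hcim1 : (Finset.univ.image p.1).card = r := by omega
              have hcim2 : (Finset.univ.image p.2).card = s := by omega
              have hcinter : ((Finset.univ.image p.1) ∩ (Finset.univ.image p.2)).card = 0 := by
                omega
              have hpjinj : Function.Injective p.1 := by
                have : Set.InjOn p.1 ↑(Finset.univ : Finset (Fin r)) := by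
                  apply Finset.injOn_of_card_image_eq
                  rw [hcim1, Finset.card_univ, Fintype.card_fin]
                intro x y hxy
                exact this (by simp) (by simp) hxy
              have hpdisj : ∀ i c, p.1 i ≠ p.2 c := by
                intro i c hc
                have : p.1 i ∈ (Finset.univ.image p.1) ∩ (Finset.univ.image p.2) := by
                  rw [Finset.mem_inter]
                  constructor
                  · exact Finset.mem_image_of_mem _ (Finset.mem_univ i)
                  · rw [hc]
                    exact Finset.mem_image_of_mem _ (Finset.mem_univ c)
                rw [Finset.card_eq_zero] at hcinter
                rw [hcinter] at this
                exact absurd this (Finset.notMem_empty _)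
              obtain ⟨h, hh, hmapj, hmapa⟩ := exists_bigfix_extend2
                hjinj hainj hdisj hjs has hpjinj hasp.1 hpdisj hjsp hasp.2
              refine ⟨h, hh, ?_⟩
              rw [hW, Wp_conj hh hκ hbs, ← hpeq]
              congr 1
              · funext i
                exact (hmapj i).symm
              · funext c
                exact (hmapa c).symm
            have hK4 : ∀ h : Equiv.Perm (Fin (n + m)), BigFix n h →
                Qel.coeff (h * g * h⁻¹) = Qel.coeff g := by
              intro h hh
              rw [hQcoeff, hQcoeff]
              congr 1
              apply Finset.card_bij'
                (i := fun (p : (Fin r → Fin (n + m)) × (Fin s → Fin (n + m))) _ =>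
                  ((fun i => h⁻¹ (p.1 i)), (fun c => h⁻¹ (p.2 c))))
                (j := fun (p : (Fin r → Fin (n + m)) × (Fin s → Fin (n + m))) _ =>
                  ((fun i => h (p.1 i)), (fun c => h (p.2 c))))
              · rintro ⟨pj, pa⟩ hp
                rw [Finset.mem_filter, Finset.mem_product] at hp ⊢
                obtain ⟨⟨h1, h2⟩, heq⟩ := hp
                simp only [JT, AT, Finset.mem_filter, Finset.mem_univ, true_and] at h1 h2 ⊢
                refine ⟨⟨fun i => hh.inv.small (h1 i),
                  ⟨fun x y hxy => h2.1 (h⁻¹.injective hxy), fun c => hh.inv.small (h2.2 c)⟩⟩, ?_⟩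
                have hc := Wp_conj (h := h⁻¹) hh.inv hκ hbs (j := pj) (a := pa) (es := es)
                rw [heq] at hc
                rw [← hc]
                group
              · rintro ⟨pj, pa⟩ hp
                rw [Finset.mem_filter, Finset.mem_product] at hp ⊢
                obtain ⟨⟨h1, h2⟩, heq⟩ := hp
                simp only [JT, AT, Finset.mem_filter, Finset.mem_univ, true_and] at h1 h2 ⊢
                refine ⟨⟨fun i => hh.small (h1 i),
                  ⟨fun x y hxy => h2.1 (h.injective hxy), fun c => hh.small (h2.2 c)⟩⟩, ?_⟩
                have hc := Wp_conj (h := h) hh hκ hbs (j := pj) (a := pa) (es := es)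
                rw [heq] at hc
                exact hc.symm
              · rintro ⟨pj, pa⟩ _
                refine Prod.ext ?_ ?_ <;> funext z <;> simp
              · rintro ⟨pj, pa⟩ _
                refine Prod.ext ?_ ?_ <;> funext z <;> simp
            set c0 : ℂ := Qel.coeff g with hc0
            set x' : MonoidAlgebra ℂ (Equiv.Perm (Fin (n + m))) := x - (x.coeff g / c0) • Qel
              with hx'def
            have hx'C : x' ∈ Subalgebra.centralizer ℂ
                ((lowerGroupAlgebra n m : Set (MonoidAlgebra ℂ (Equiv.Perm (Fin (n + m)))))) :=
              Subalgebra.sub_mem _ hC (Subalgebra.smul_mem _ (adjoin_le_centralizer hQmem) _)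
            have hx'app : ∀ τ, x'.coeff τ = x.coeff τ - (x.coeff g / c0) * Qel.coeff τ := by
              intro τ
              rw [hx'def, MonoidAlgebra.coeff_sub, MonoidAlgebra.coeff_smul, Finsupp.sub_apply, Finsupp.smul_apply, smul_eq_mul]
            have hx'supp : ∀ τ ∈ x'.coeff.support, sstat n τ ≤ q + 1 := by
              intro τ hτ
              rw [Finsupp.mem_support_iff] at hτ
              by_cases hxτ : x.coeff τ ≠ 0
              · exact hsupp τ (Finsupp.mem_support_iff.mpr hxτ)
              · push_neg at hxτ
                have : Qel.coeff τ ≠ 0 := by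
                  intro hc
                  apply hτ
                  rw [hx'app, hxτ, hc, mul_zero, sub_zero]
                exact hK1 τ this
            have hx'top : x'.coeff.support.filter (fun τ => sstat n τ = q + 1)
                ⊆ (x.coeff.support.filter (fun τ => sstat n τ = q + 1)).erase g := by
              intro τ hτ
              rw [Finset.mem_filter, Finsupp.mem_support_iff] at hτ
              obtain ⟨hτne, hτstat⟩ := hτ
              by_cases hQτ : Qel.coeff τ = 0
              · have hxτ : x'.coeff τ = x.coeff τ := by
                  rw [hx'app, hQτ, mul_zero, sub_zero]
                rw [Finset.mem_erase, Finset.mem_filter, Finsupp.mem_support_iff]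
                refine ⟨fun hc => ?_, by rw [← hxτ]; exact hτne, hτstat⟩
                subst hc
                exact hQg hQτ
              · obtain ⟨h, hh, rfl⟩ := hK3 τ hτstat hQτ
                exfalso
                apply hτne
                rw [hx'app, centralizer_coeff_invariant hC hh g, hK4 h hh,
                  div_mul_cancel₀ _ hQg, sub_self]
            have hcard' : (x'.coeff.support.filter (fun τ => sstat n τ = q + 1)).card ≤ k := by
              have h1 := Finset.card_le_card hx'top
              have h2 := Finset.card_erase_of_mem hgmem
              omega
            have hx'mem := ihk x' hx'C hx'supp hcard'
            have hxeq : x = x' + (x.coeff g / c0) • Qel := by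
              rw [hx'def, sub_add_cancel]
            rw [hxeq]
            exact add_mem hx'mem (Subalgebra.smul_mem _ hQmem _)

end OlshAux

namespace OlshAux

variable {n m : ℕ}

theorem centralizer_le_adjoin :
    Subalgebra.centralizer ℂ
      ((lowerGroupAlgebra n m : Set (MonoidAlgebra ℂ (Equiv.Perm (Fin (n + m)))))) ≤
    Algebra.adjoin ℂ (Gens n m) := by
  intro x hx
  apply centralizer_le_adjoin_aux (x.coeff.support.sup (sstat n))
    ((x.coeff.support.filter (fun g => sstat n g = x.coeff.support.sup (sstat n))).card) x hx
  · intro g hg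
    exact Finset.le_sup hg
  · exact le_rfl

end OlshAux


/-- **Olshanskii's Lemma.**  The centralizer `Z_{n,m}` of `ℂ[S_n]` in `ℂ[S_{n+m}]` is
generated as a `ℂ`-algebra by (a) the images of the permutations in the subgroup
`S'_m` of permutations fixing `1, …, n` pointwise, (b) the center `Z_n` of `ℂ[S_n]`,
and (c) the Jucys–Murphy elements `L_{n+1}, …, L_{n+m}` (0-indexed: `JM (n+m) k` for
`n ≤ k`). -/
theorem olshanskii_lemma (n m : ℕ) :
    Algebra.adjoin ℂ
      ({a | ∃ σ : Equiv.Perm (Fin (n + m)),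
          (∀ j : Fin (n + m), (j : ℕ) < n → σ j = j) ∧
          a = MonoidAlgebra.of ℂ (Equiv.Perm (Fin (n + m))) σ} ∪
        {z | z ∈ lowerGroupAlgebra n m ∧
          ∀ w ∈ lowerGroupAlgebra n m, z * w = w * z} ∪
        {a | ∃ k : Fin (n + m), n ≤ (k : ℕ) ∧ a = JM (n + m) k}) =
      Subalgebra.centralizer ℂ
        ((lowerGroupAlgebra n m : Set (MonoidAlgebra ℂ (Equiv.Perm (Fin (n + m)))))) := by
  apply le_antisymm
  · exact OlshAux.adjoin_le_centralizer
  · exact OlshAux.centralizer_le_adjoin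
end

section
/- Let B ⊆ A be finite-dimensional semisimple ℂ-algebras and let C be the centralizer of B in A. Let V be a simple A-module and W a simple B-module. Give Hom_B(W, V) (here V is regarded as a B-module by restriction) the C-module structure (c·f)(w) = c·f(w). If Hom_B(W, V) is nonzero, then it is a simple C-module. -/
section

variable {A : Type*} [Ring A] [Algebra ℂ A]
variable {V : Type*} [AddCommGroup V] [Module ℂ V] [Module A V] [IsScalarTower ℂ A V]
variable {W : Type*} [AddCommGroup W] [Module ℂ W]

/-- For a subalgebra `B ⊆ A`, the space `Hom_B(W, V)` of `B`-module maps from `W` to the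
restriction of the `A`-module `V` to `B`, realized as a `ℂ`-subspace of `Hom_ℂ(W, V)`. -/
def homB (B : Subalgebra ℂ A) [Module B W] [IsScalarTower ℂ B W] :
    Submodule ℂ (W →ₗ[ℂ] V) where
  carrier := {f | ∀ (b : B) (w : W), f (b • w) = (b : A) • f w}
  add_mem' := by
    intro f g hf hg b w
    simp [hf b w, hg b w, smul_add]
  zero_mem' := by intro b w; simp
  smul_mem' := by
    intro c f hf b w
    rw [LinearMap.smul_apply, LinearMap.smul_apply, hf b w]
    exact smul_comm c ((b : A)) (f w)

/-- The action of an element `c ∈ A` on `Hom_ℂ(W, V)` by postcomposition,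
`(c • f) w = c • (f w)`. -/
def postSmul (c : A) (f : W →ₗ[ℂ] V) : W →ₗ[ℂ] V where
  toFun w := c • f w
  map_add' w₁ w₂ := by simp [smul_add]
  map_smul' r w := by
    simp only [map_smul, RingHom.id_apply]
    exact smul_comm c r (f w)

end


section Aux

variable {A : Type*} [Ring A] [Algebra ℂ A]
variable {V : Type*} [AddCommGroup V] [Module ℂ V] [Module A V] [IsScalarTower ℂ A V]

example : SMulCommClass ℂ A V := inferInstance

lemma aux_findim [FiniteDimensional ℂ A] [IsSimpleModule A V] : FiniteDimensional ℂ V := by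
  have := IsSimpleModule.nontrivial A V
  obtain ⟨v, hv⟩ := exists_ne (0 : V)
  have hsurj := IsSimpleModule.toSpanSingleton_surjective A (M := V) hv
  let ℓ : A →ₗ[ℂ] V :=
    { toFun := fun a => a • v
      map_add' := fun a b => add_smul a b v
      map_smul' := fun r a => by simp [smul_assoc] }
  have hs : Function.Surjective ℓ := fun x => by
    obtain ⟨a, ha⟩ := hsurj x; exact ⟨a, ha⟩
  exact Module.Finite.of_surjective ℓ hs

lemma aux_schur [FiniteDimensional ℂ A] [IsSimpleModule A V] (φ : V →ₗ[A] V) :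
    ∃ μ : ℂ, ∀ v : V, φ v = μ • v := by
  have : FiniteDimensional ℂ V := aux_findim (A := A) (V := V)
  have := IsSimpleModule.nontrivial A V
  let ψ : Module.End ℂ V := φ.restrictScalars ℂ
  obtain ⟨μ, hμ⟩ := Module.End.exists_eigenvalue ψ
  obtain ⟨v, hv⟩ := hμ.exists_hasEigenvector
  refine ⟨μ, ?_⟩
  let θ : V →ₗ[A] V :=
    { toFun := fun x => φ x - μ • x
      map_add' := fun x y => by simp [add_smul]; abel
      map_smul' := fun a x => by
        simp only [map_smul, RingHom.id_apply, smul_sub]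
        rw [smul_comm μ a x] }
  have hθv : θ v = 0 := by
    have hev : ψ v = μ • v := hv.apply_eq_smul
    show φ v - μ • v = 0
    rw [show φ v = ψ v from rfl, hev, sub_self]
  have hθ : θ = 0 := by
    rcases θ.injective_or_eq_zero with h | h
    · exact absurd (h (by rw [hθv, map_zero])) hv.2
    · exact h
  intro x
  have := LinearMap.congr_fun hθ x
  simpa [θ, sub_eq_zero] using this

end Aux

section Dens
variable {A : Type*} [Ring A] [Algebra ℂ A]
variable {V : Type*} [AddCommGroup V] [Module ℂ V] [Module A V] [IsScalarTower ℂ A V]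

lemma aux_density [FiniteDimensional ℂ A] [IsSemisimpleRing A] [IsSimpleModule A V]
    (φ : V →ₗ[ℂ] V) : ∃ a : A, ∀ v : V, a • v = φ v := by
  classical
  have : FiniteDimensional ℂ V := aux_findim (A := A) (V := V)
  set n := Module.finrank ℂ V with hn
  let b : Module.Basis (Fin n) ℂ V := Module.finBasis ℂ V
  let ψ : A →ₗ[A] (Fin n → V) :=
    { toFun := fun a i => a • b i
      map_add' := fun a₁ a₂ => funext fun i => add_smul a₁ a₂ (b i)
      map_smul' := fun x a => funext fun i => mul_smul x a (b i) }
  set N := LinearMap.range ψ with hN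
  obtain ⟨N', hc⟩ := exists_isCompl N
  let q : (Fin n → V) →ₗ[A] (Fin n → V) := N.subtype ∘ₗ N.projectionOnto N' hc
  have hqN : ∀ y ∈ N, q y = y := by
    intro y hy
    show ↑(N.projectionOnto N' hc y) = y
    rw [show y = ↑(⟨y, hy⟩ : N) from rfl, Submodule.linearProjOfIsCompl_apply_left hc]
  have hqmem : ∀ z, q z ∈ N := fun z => (N.projectionOnto N' hc z).2
  have schur' : ∀ i j : Fin n, ∃ μ : ℂ, ∀ v : V,
      (LinearMap.proj i ∘ₗ q ∘ₗ LinearMap.single A (fun _ => V) j) v = μ • v :=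
    fun i j => aux_schur _
  choose c hcc using schur'
  have hq_eq : ∀ (y : Fin n → V) (i : Fin n), q y i = ∑ j, c i j • y j := by
    intro y i
    conv_lhs => rw [← Finset.univ_sum_single y]
    rw [map_sum, Finset.sum_apply]
    exact Finset.sum_congr rfl fun j _ => hcc i j (y j)
  have hb : ∀ i, ∑ j, c i j • b j = b i := by
    intro i
    have h1 := hqN (ψ 1) (LinearMap.mem_range_self ψ 1)
    have h2 := congrFun h1 i
    rw [hq_eq (ψ 1) i] at h2
    simpa [ψ] using h2
  set y₀ : Fin n → V := fun j => φ (b j) with hy₀def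
  have hy₀ : q y₀ = y₀ := by
    funext i
    rw [hq_eq]
    calc ∑ j, c i j • y₀ j = φ (∑ j, c i j • b j) := by
          rw [map_sum]; exact Finset.sum_congr rfl fun j _ => (φ.map_smul _ _).symm
      _ = y₀ i := by rw [hb i]
  have hy₀N : y₀ ∈ N := hy₀ ▸ hqmem y₀
  obtain ⟨a, ha⟩ := hy₀N
  refine ⟨a, ?_⟩
  let ℓa : V →ₗ[ℂ] V :=
    { toFun := fun v => a • v
      map_add' := fun v w => smul_add a v w
      map_smul' := fun r v => (smul_comm r a v).symm }
  have heq : ℓa = φ := by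
    apply b.ext
    intro j
    show a • b j = φ (b j)
    exact congrFun ha j
  exact fun v => LinearMap.congr_fun heq v

end Dens
section Idem

lemma aux_sq_bot (A : Type*) [Ring A] [IsSemisimpleRing A] (L : Ideal A)
    (hL : ∀ x ∈ L, ∀ y ∈ L, x * y = 0) : L = ⊥ := by
  obtain ⟨g, hg, hspan⟩ := IsSemisimpleRing.ideal_eq_span_idempotent L
  have hgL : g ∈ L := hspan ▸ Ideal.subset_span rfl
  have hg0 : g = 0 := by rw [← hg]; exact hL g hgL g hgL
  rw [hspan, hg0]
  exact Ideal.span_singleton_eq_bot.mpr rfl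

lemma aux_good_idem (A : Type*) [Ring A] [IsSemisimpleRing A] (I : Ideal A)
    (hI : ∀ a ∈ I, ∀ x : A, a * x ∈ I) :
    ∃ e : A, (1 - e) ∈ I ∧ (∀ k ∈ I, e * k = 0) ∧ ∀ x : A, e * x = x * e := by
  obtain ⟨N', hc⟩ := exists_isCompl (I : Submodule A A)
  obtain ⟨f, hfI, z, hz, hfz⟩ := Submodule.mem_sup.mp
    (by rw [hc.sup_eq_top]; exact Submodule.mem_top : (1 : A) ∈ I ⊔ N')
  have hzf : z = 1 - f := eq_sub_of_add_eq' hfz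
  have key1 : ∀ a ∈ I, a * (1 - f) = 0 := by
    intro a ha
    have h1 : a * (1 - f) ∈ N' := by
      have := N'.smul_mem a (hzf ▸ hz)
      rwa [smul_eq_mul] at this
    have h2 : a * (1 - f) ∈ I := by
      have haf : a * f ∈ I := by
        have := I.smul_mem a hfI; rwa [smul_eq_mul] at this
      have := I.sub_mem ha haf
      simpa [mul_sub, mul_one] using this
    exact (Submodule.disjoint_def.mp hc.disjoint) _ h2 h1
  set L : Ideal A := Ideal.span ((fun a => (1 - f) * a) '' (I : Set A)) with hLdef
  have hgenI : ∀ x ∈ ((fun a => (1 - f) * a) '' (I : Set A)), x ∈ I := by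
    rintro x ⟨a, ha, rfl⟩
    have hfa : f * a ∈ I := by
      have := I.smul_mem f ha; rwa [smul_eq_mul] at this
    have := I.sub_mem ha hfa
    simpa [sub_mul, one_mul] using this
  have hLI : L ≤ I := Ideal.span_le.mpr hgenI
  have hmul : ∀ y ∈ L, ∀ m ∈ I, m * y = 0 := by
    intro y hy
    induction hy using Submodule.span_induction with
    | mem x hx =>
        obtain ⟨a, _, rfl⟩ := hx
        intro m hm
        rw [← mul_assoc, key1 m hm, zero_mul]
    | zero => intro m _; rw [mul_zero]
    | add x y _ _ ihx ihy => intro m hm; rw [mul_add, ihx m hm, ihy m hm, add_zero]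
    | smul r x _ ih =>
        intro m hm
        rw [smul_eq_mul, ← mul_assoc]
        exact ih (m * r) (hI m hm r)
  have hLbot : L = ⊥ := aux_sq_bot A L (fun x hx y hy => hmul y hy x (hLI hx))
  have key2 : ∀ k ∈ I, (1 - f) * k = 0 := by
    intro k hk
    have : (1 - f) * k ∈ L := Ideal.subset_span ⟨k, hk, rfl⟩
    rw [hLbot] at this
    simpa using this
  have key3 : ∀ x : A, (1 - f) * x = x * (1 - f) := by
    intro x
    have h1 : f * x ∈ I := hI f hfI x
    have h2 : (f * x) * (1 - f) = 0 := key1 _ h1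
    have h3 : x * f ∈ I := by
      have := I.smul_mem x hfI; rwa [smul_eq_mul] at this
    have h4 : (1 - f) * (x * f) = 0 := key2 _ h3
    rw [mul_sub, mul_one] at h2
    rw [sub_mul, one_mul] at h4
    have e1 : f * x = f * x * f := (sub_eq_zero.mp h2)
    have e2 : x * f = f * (x * f) := (sub_eq_zero.mp h4)
    have e3 : f * x = x * f := by rw [e1, e2, mul_assoc]
    rw [sub_mul, mul_sub, one_mul, mul_one, e3]
  exact ⟨1 - f, by simpa using hfI, key2, key3⟩

end Idem
section Step3

variable {A : Type*} [Ring A] [Algebra ℂ A]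
variable {V : Type*} [AddCommGroup V] [Module ℂ V] [Module A V] [IsScalarTower ℂ A V]

lemma aux_centralizer_lift [FiniteDimensional ℂ A] [IsSemisimpleRing A] [IsSimpleModule A V]
    (B : Subalgebra ℂ A) (φ : V →ₗ[ℂ] V)
    (hφ : ∀ (b : B) (v : V), φ ((b : A) • v) = (b : A) • φ v) :
    ∃ c ∈ Subalgebra.centralizer ℂ (B : Set A), ∀ v : V, c • v = φ v := by
  obtain ⟨a, ha⟩ := aux_density (A := A) φ
  set I : Ideal A :=
    { carrier := {x : A | ∀ v : V, x • v = 0}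
      add_mem' := fun {x y} hx hy v => by rw [add_smul, hx v, hy v, add_zero]
      zero_mem' := fun v => zero_smul A v
      smul_mem' := fun c x hx v => by
        rw [smul_eq_mul, mul_smul, hx v, smul_zero] } with hIdef
  have hI : ∀ x ∈ I, ∀ y : A, x * y ∈ I := fun x hx y v => by
    show (x * y) • v = 0
    rw [mul_smul]; exact hx _
  obtain ⟨e, heI, hek, hecomm⟩ := aux_good_idem A I hI
  refine ⟨e * a, ?_, ?_⟩
  · rw [Subalgebra.mem_centralizer_iff]
    intro x hx
    have hcommI : a * x - x * a ∈ I := by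
      intro v
      have hb := hφ ⟨x, hx⟩ v
      rw [sub_smul, mul_smul, mul_smul, ha (x • v), ha v]
      rw [show ((⟨x, hx⟩ : B) : A) = x from rfl] at hb
      rw [hb, sub_self]
    have h0 : e * (a * x) - e * (x * a) = 0 := by
      rw [← mul_sub]; exact hek _ hcommI
    calc x * (e * a) = e * (x * a) := by rw [← mul_assoc, ← hecomm x, mul_assoc]
      _ = e * (a * x) := (sub_eq_zero.mp h0).symm
      _ = (e * a) * x := by rw [mul_assoc]
  · intro v
    have h2 : e • φ v = φ v := by
      have := heI (φ v)
      rw [sub_smul, one_smul, sub_eq_zero] at this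
      exact this.symm
    rw [mul_smul, ha v, h2]

end Step3
/-- Let `B ⊆ A` be finite-dimensional semisimple `ℂ`-algebras and let `C` be the
centralizer of `B` in `A`.  If `V` is a simple `A`-module and `W` a simple `B`-module,
and the space `Hom_B(W, V)` (with `C`-action `(c • f) w = c • f w`) is nonzero, then it
is a simple `C`-module: any `ℂ`-subspace of `Hom_B(W, V)` stable under the action of
every `c ∈ C` is `0` or all of `Hom_B(W, V)`. -/
theorem hom_space_simple_over_centralizer
    (A : Type*) [Ring A] [Algebra ℂ A] [FiniteDimensional ℂ A] [IsSemisimpleRing A]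
    (B : Subalgebra ℂ A) [IsSemisimpleRing B]
    (V : Type*) [AddCommGroup V] [Module ℂ V] [Module A V] [IsScalarTower ℂ A V]
    [IsSimpleModule A V]
    (W : Type*) [AddCommGroup W] [Module ℂ W] [Module B W] [IsScalarTower ℂ B W]
    [IsSimpleModule B W]
    (hne : (homB (V := V) (W := W) B) ≠ ⊥) :
    ∀ p : Submodule ℂ (W →ₗ[ℂ] V),
      p ≤ homB (V := V) (W := W) B →
      (∀ c ∈ Subalgebra.centralizer ℂ (B : Set A), ∀ f ∈ p, postSmul c f ∈ p) →
      p = ⊥ ∨ p = homB (V := V) (W := W) B := by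
  intro p hp hstab
  rcases eq_or_ne p ⊥ with h | h
  · exact Or.inl h
  right
  obtain ⟨f, hfp, hf0⟩ := (Submodule.ne_bot_iff p).mp h
  refine le_antisymm hp ?_
  intro g hg
  have hfB : ∀ (b : B) (w : W), f (b • w) = (b : A) • f w := hp hfp
  have hgB : ∀ (b : B) (w : W), g (b • w) = (b : A) • g w := hg
  let F : W →ₗ[B] V :=
    { toFun := f
      map_add' := f.map_add
      map_smul' := fun b w => hfB b w }
  have hFinj : Function.Injective F := by
    apply LinearMap.injective_of_ne_zero
    intro h0
    exact hf0 (LinearMap.ext fun w => LinearMap.congr_fun h0 w)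
  let G : W →ₗ[B] V :=
    { toFun := g
      map_add' := g.map_add
      map_smul' := fun b w => hgB b w }
  set N : Submodule B V := LinearMap.range F with hNdef
  obtain ⟨N', hcN⟩ := exists_isCompl N
  let eF : W ≃ₗ[B] N := LinearEquiv.ofInjective F hFinj
  let φB : V →ₗ[B] V := G ∘ₗ (eF.symm : N →ₗ[B] W) ∘ₗ N.projectionOnto N' hcN
  have hφf : ∀ w : W, φB (f w) = g w := by
    intro w
    have hmem : F w ∈ N := LinearMap.mem_range_self F w
    have h1 : N.projectionOnto N' hcN (f w) = eF w := by
      rw [show (f w : V) = ↑(⟨F w, hmem⟩ : N) from rfl,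
        Submodule.linearProjOfIsCompl_apply_left hcN]
      exact Subtype.ext (LinearEquiv.ofInjective_apply F (h := hFinj) w).symm
    show G (eF.symm (N.projectionOnto N' hcN (f w))) = g w
    rw [h1, LinearEquiv.symm_apply_apply]
    rfl
  let φ : V →ₗ[ℂ] V :=
    { toFun := φB
      map_add' := φB.map_add
      map_smul' := fun r v => by
        simp only [RingHom.id_apply]
        rw [← algebraMap_smul B r v, ← algebraMap_smul B r (φB v)]
        exact φB.map_smul _ v }
  have hφeq : ∀ (b : B) (v : V), φ ((b : A) • v) = (b : A) • φ v := fun b v =>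
    φB.map_smul b v
  obtain ⟨c, hcC, hcv⟩ := aux_centralizer_lift (A := A) (V := V) B φ hφeq
  have hfinal : postSmul c f = g := by
    ext w
    show c • f w = g w
    rw [hcv (f w)]
    exact hφf w
  exact hfinal ▸ hstab c hcC f hfp
end

section
/- The centralizer of the subalgebra ℂ[S_{n−1}] in the group algebra ℂ[S_n] is a commutative algebra, where S_{n−1} ⊆ S_n is the subgroup of permutations fixing n. -/
/-- The group algebra `ℂ[S_{n-1}]` sitting inside `ℂ[S_n]`, where `S_n` is realized as
`Equiv.Perm (Fin (n+1))` (so `S_{n-1}` is the subgroup of permutations fixing the last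
point). -/
noncomputable def smallGroupAlgebra (n : ℕ) :
    Subalgebra ℂ (MonoidAlgebra ℂ (Equiv.Perm (Fin (n + 1)))) :=
  Algebra.adjoin ℂ
    {a : MonoidAlgebra ℂ (Equiv.Perm (Fin (n + 1))) |
      ∃ σ : Equiv.Perm (Fin (n + 1)), σ (Fin.last n) = Fin.last n ∧
        a = MonoidAlgebra.of ℂ (Equiv.Perm (Fin (n + 1))) σ}

/-- The centralizer of `ℂ[S_{n-1}]` inside `ℂ[S_n]`. -/
noncomputable def smallCentralizer (n : ℕ) :
    Subalgebra ℂ (MonoidAlgebra ℂ (Equiv.Perm (Fin (n + 1)))) :=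
  Subalgebra.centralizer ℂ
    ((smallGroupAlgebra n : Set (MonoidAlgebra ℂ (Equiv.Perm (Fin (n + 1))))))


open Equiv MonoidAlgebra in

/-- Any permutation is conjugate to its inverse by a permutation fixing a given point. -/
theorem exists_conj_inv_fix {α : Type*} (σ : Equiv.Perm α) (p : α) :
    ∃ h : Equiv.Perm α, h p = p ∧ h⁻¹ * σ * h = σ⁻¹ := by
  classical
  have zp : ∀ (a b : ℤ) (y : α), (σ ^ (a + b)) y = (σ ^ a) ((σ ^ b) y) := by
    intro a b y; rw [zpow_add, Perm.mul_apply]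
  set rep : α → α := fun x =>
    if σ.SameCycle p x then p else Quotient.out (Quotient.mk (Perm.SameCycle.setoid σ) x)
    with hrepdef
  have hrep1 : ∀ x, σ.SameCycle (rep x) x := by
    intro x
    by_cases hx : σ.SameCycle p x
    · simpa [hrepdef, hx] using hx
    · simp only [hrepdef, hx, if_false]
      exact Quotient.mk_out (s := Perm.SameCycle.setoid σ) x
  have hrep2 : ∀ x y, σ.SameCycle x y → rep x = rep y := by
    intro x y hxy
    by_cases hx : σ.SameCycle p x
    · simp [hrepdef, hx, hx.trans hxy]
    · have hy : ¬ σ.SameCycle p y := fun hc => hx (hc.trans hxy.symm)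
      simp only [hrepdef, hx, hy, if_false]
      congr 1
      exact Quotient.sound hxy
  have hk : ∀ x, ∃ i : ℤ, (σ ^ i) (rep x) = x := fun x => hrep1 x
  set k : α → ℤ := fun x => (hk x).choose with hkdef
  have hk1 : ∀ x, (σ ^ (k x)) (rep x) = x := fun x => (hk x).choose_spec
  set h0 : α → α := fun x => (σ ^ (-(k x))) (rep x) with h0def
  have key : ∀ (x : α) (j : ℤ), (σ ^ j) (rep x) = x → h0 x = (σ ^ (-j)) (rep x) := by
    intro x j hj
    have e1 : (σ ^ (k x - j)) (rep x) = rep x := by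
      have t : (σ ^ (-j + k x)) (rep x) = (σ ^ (-j)) ((σ ^ j) (rep x)) := by
        rw [zp, hk1, hj]
      rw [← zp, show (-j + j : ℤ) = 0 from by ring, zpow_zero] at t
      simp only [Perm.one_def, Equiv.refl_apply] at t
      rw [show k x - j = -j + k x from by ring]
      exact t
    have e2 : (σ ^ (j - k x)) (rep x) = rep x := by
      have := congrArg (fun y => (σ ^ (j - k x)) y) e1
      rw [← zp] at this
      have h' : j - k x + (k x - j) = 0 := by ring
      rw [h'] at this
      simpa using this.symm
    calc h0 x = (σ ^ (-(k x))) (rep x) := rfl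
      _ = (σ ^ (-j)) (rep x) := by
          rw [show (-(k x) : ℤ) = -j + (j - k x) from by ring, zp, e2]
  have hsame : ∀ x, σ.SameCycle x (h0 x) := by
    intro x
    exact (hrep1 x).symm.trans ⟨-(k x), rfl⟩
  have hrep_h0 : ∀ x, rep (h0 x) = rep x := fun x => (hrep2 _ _ (hsame x)).symm
  have hinv : Function.Involutive h0 := by
    intro x
    have hj : (σ ^ (-(k x))) (rep (h0 x)) = h0 x := by rw [hrep_h0]
    rw [key (h0 x) (-(k x)) hj, neg_neg, hrep_h0]
    exact hk1 x
  have hcomm : ∀ x, h0 (σ x) = σ⁻¹ (h0 x) := by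
    intro x
    have hrs : rep (σ x) = rep x := (hrep2 _ _ ⟨1, by simp⟩).symm
    have hj : (σ ^ (k x + 1)) (rep (σ x)) = σ x := by
      rw [hrs]
      have h' : (k x + 1 : ℤ) = 1 + k x := by ring
      rw [h', zp, hk1, zpow_one]
    rw [key (σ x) (k x + 1) hj, hrs]
    have h' : (-(k x + 1) : ℤ) = -1 + -(k x) := by ring
    rw [h', zp, zpow_neg_one]
  have hp : h0 p = p := by
    have hrp : rep p = p := by
      simp only [hrepdef]
      exact if_pos (Perm.SameCycle.refl σ p)
    have := key p 0 (by simp [hrp])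
    rw [this, neg_zero, zpow_zero]
    simpa using hrp
  refine ⟨hinv.toPerm, hp, ?_⟩
  ext x
  have hsymm : (hinv.toPerm)⁻¹ = hinv.toPerm := by ext y; rfl
  rw [hsymm]
  simp only [Perm.mul_apply]
  show h0 (σ (h0 x)) = σ⁻¹ x
  rw [hcomm, hinv]

/-- Elements of the centralizer are invariant under conjugation by point-fixing perms. -/
theorem centralizer_conj_invariant {n : ℕ}
    {z : MonoidAlgebra ℂ (Equiv.Perm (Fin (n + 1)))} (hz : z ∈ smallCentralizer n)
    {h : Equiv.Perm (Fin (n + 1))} (hh : h (Fin.last n) = Fin.last n)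
    (σ : Equiv.Perm (Fin (n + 1))) : z.coeff (h⁻¹ * σ * h) = z.coeff σ := by
  have hmem : MonoidAlgebra.of ℂ (Equiv.Perm (Fin (n + 1))) h ∈
      (smallGroupAlgebra n : Set (MonoidAlgebra ℂ (Equiv.Perm (Fin (n + 1))))) :=
    Algebra.subset_adjoin ⟨h, hh, rfl⟩
  have hcomm := (Subalgebra.mem_centralizer_iff ℂ).mp hz _ hmem
  have := congrArg (fun f : MonoidAlgebra ℂ (Equiv.Perm (Fin (n + 1))) => f.coeff (σ * h)) hcomm
  simp only [MonoidAlgebra.of_apply, MonoidAlgebra.single_mul_apply,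
    MonoidAlgebra.mul_single_apply, one_mul, mul_one, mul_inv_cancel] at this
  rw [mul_assoc, this, mul_inv_cancel_right]

/-- Elements of the centralizer are symmetric: `z σ⁻¹ = z σ`. -/
theorem centralizer_symm {n : ℕ}
    {z : MonoidAlgebra ℂ (Equiv.Perm (Fin (n + 1)))} (hz : z ∈ smallCentralizer n)
    (σ : Equiv.Perm (Fin (n + 1))) : z.coeff σ⁻¹ = z.coeff σ := by
  obtain ⟨h, hh, hconj⟩ := exists_conj_inv_fix σ (Fin.last n)
  rw [← hconj]
  exact centralizer_conj_invariant hz hh σ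

theorem mul_apply_fintype {G : Type*} [Group G] [Fintype G] [DecidableEq G]
    (f g : MonoidAlgebra ℂ G) (x : G) :
    (f * g).coeff x = ∑ a : G, f.coeff a * g.coeff (a⁻¹ * x) := by
  rw [MonoidAlgebra.coeff_mul_apply_left]
  rw [Finsupp.sum_fintype]
  intro a
  simp


/-- The centralizer of the subalgebra `ℂ[S_{n-1}]` in the group algebra `ℂ[S_n]`
is a commutative algebra. -/
theorem centralizer_of_smaller_group_algebra_commutative (n : ℕ) :
    ∀ x ∈ smallCentralizer n, ∀ y ∈ smallCentralizer n, x * y = y * x := by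
  intro x hx y hy
  ext σ
  have hyx : y * x ∈ smallCentralizer n := mul_mem hy hx
  have key : (x * y).coeff σ = (y * x).coeff σ⁻¹ := by
    rw [mul_apply_fintype, mul_apply_fintype]
    refine Fintype.sum_equiv (Equiv.mulLeft σ⁻¹) _ _ ?_
    intro a
    simp only [Equiv.coe_mulLeft]
    rw [show (σ⁻¹ * a)⁻¹ * σ⁻¹ = a⁻¹ from by group,
      centralizer_symm hx a,
      show σ⁻¹ * a = (a⁻¹ * σ)⁻¹ from by group,
      centralizer_symm hy (a⁻¹ * σ), mul_comm]
  rw [key, centralizer_symm hyx σ]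
end

section
/- Let H₂ be the associative unital ℂ-algebra with generators s, x, y and relations xy = yx, s² = 1, sx = ys − 1 (the rank two degenerate affine Hecke algebra). Then every finite-dimensional irreducible H₂-module is isomorphic to L(a,b) for some a, b ∈ ℂ with either b = a ± 1 or a ≠ b ± 1; in particular every finite-dimensional irreducible H₂-module has dimension 1 or 2. -/
private lemma hecke_line_mem {V : Type*} [AddCommGroup V] [Module ℂ V]
    (A : Module.End ℂ V) (u : V) (α : ℂ) (hA : A u = α • u) :
    ∀ v ∈ Submodule.span ℂ ({u} : Set V), A v ∈ Submodule.span ℂ ({u} : Set V) := by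
  intro v hv
  rw [Submodule.mem_span_singleton] at hv ⊢
  obtain ⟨t, rfl⟩ := hv
  exact ⟨t * α, by rw [map_smul, hA, smul_smul]⟩

private lemma hecke_line_top {V : Type*} [AddCommGroup V] [Module ℂ V]
    (S X Y : Module.End ℂ V)
    (hirr : ∀ p : Submodule ℂ V,
      (∀ v ∈ p, S v ∈ p) → (∀ v ∈ p, X v ∈ p) → (∀ v ∈ p, Y v ∈ p) →
      p = ⊥ ∨ p = ⊤)
    (u : V) (hu : u ≠ 0) (α β γ : ℂ)
    (hS : S u = α • u) (hX : X u = β • u) (hY : Y u = γ • u) :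
    Submodule.span ℂ ({u} : Set V) = ⊤ := by
  rcases hirr (Submodule.span ℂ {u}) (hecke_line_mem S u α hS)
      (hecke_line_mem X u β hX) (hecke_line_mem Y u γ hY) with h | h
  · exact absurd (Submodule.span_singleton_eq_bot.mp h) hu
  · exact h

/-- Classification of the finite-dimensional irreducible modules over the rank two
degenerate affine Hecke algebra `H₂ = ⟨s, x, y | xy = yx, s² = 1, sx = ys − 1⟩`.

Since `H₂` is presented by generators and relations, an `H₂`-module is the same thing as
a `ℂ`-vector space `V` together with endomorphisms `S, X, Y` satisfying
`X Y = Y X`, `S² = 1`, `S X = Y S − 1`; it is irreducible iff `V ≠ 0` and no proper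
nonzero subspace is invariant under `S, X, Y`.

Conclusion: every finite-dimensional irreducible `H₂`-module is isomorphic to `L(a,b)`
for some `a, b ∈ ℂ`: either it is 1-dimensional, spanned by a vector `v` with
`X v = a v`, `Y v = b v` and (`b = a + 1`, `S v = v`) or (`b = a − 1`, `S v = −v`)
(these are the modules `L(a, a±1)`); or it is 2-dimensional with `a ≠ b ± 1` and has a
basis `(v₁, v₂)` in which `X, Y, S` act by the matrices `[[a, −1],[0, b]]`,
`[[b, 1],[0, a]]`, `[[0, 1],[1, 0]]` (the module `L(a,b)`).  In particular every
finite-dimensional irreducible `H₂`-module has dimension 1 or 2. -/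
theorem degenerate_affine_hecke_rank_two_simple_modules
    (V : Type*) [AddCommGroup V] [Module ℂ V] [FiniteDimensional ℂ V]
    (S X Y : Module.End ℂ V)
    (hcomm : X * Y = Y * X) (hs : S * S = 1) (hrel : S * X = Y * S - 1)
    (hnz : ∃ v : V, v ≠ 0)
    (hirr : ∀ p : Submodule ℂ V,
      (∀ v ∈ p, S v ∈ p) → (∀ v ∈ p, X v ∈ p) → (∀ v ∈ p, Y v ∈ p) →
      p = ⊥ ∨ p = ⊤) :
    (Module.finrank ℂ V = 1 ∨ Module.finrank ℂ V = 2) ∧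
    ((Module.finrank ℂ V = 1 ∧
      ∃ (a b : ℂ) (v : V), v ≠ 0 ∧ X v = a • v ∧ Y v = b • v ∧
        ((b = a + 1 ∧ S v = v) ∨ (b = a - 1 ∧ S v = -v))) ∨
     (∃ (a b : ℂ), a ≠ b + 1 ∧ a ≠ b - 1 ∧
      ∃ B : Module.Basis (Fin 2) ℂ V,
        X (B 0) = a • B 0 ∧ X (B 1) = b • B 1 - B 0 ∧
        Y (B 0) = b • B 0 ∧ Y (B 1) = a • B 1 + B 0 ∧
        S (B 0) = B 1 ∧ S (B 1) = B 0)) := by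
  obtain ⟨v_ne, hv_ne⟩ := hnz
  haveI : Nontrivial V := nontrivial_of_ne v_ne 0 hv_ne
  -- derived relations
  have hXS : X * S = S * Y - 1 := by
    calc X * S = S * S * X * S := by rw [hs, one_mul]
      _ = S * (S * X) * S := by rw [mul_assoc S S X]
      _ = S * (Y * S - 1) * S := by rw [hrel]
      _ = S * Y * (S * S) - (S * S) := by noncomm_ring
      _ = S * Y - 1 := by rw [hs, mul_one]
  have hYS : Y * S = S * X + 1 := by rw [hrel]; noncomm_ring
  have hZS : (X + Y) * S = S * (X + Y) := by
    rw [add_mul, hXS, hYS, mul_add]; abel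
  have hZX : (X + Y) * X = X * (X + Y) := by
    rw [add_mul, mul_add, hcomm]
  have hZY : (X + Y) * Y = Y * (X + Y) := by
    rw [add_mul, mul_add, hcomm]
  -- the central element X + Y acts as a scalar c
  obtain ⟨c, hc⟩ := Module.End.exists_eigenvalue (X + Y)
  have hEig : Module.End.eigenspace (X + Y) c = ⊤ := by
    have inv : ∀ (A : Module.End ℂ V), (X + Y) * A = A * (X + Y) →
        ∀ v ∈ Module.End.eigenspace (X + Y) c, A v ∈ Module.End.eigenspace (X + Y) c := by
      intro A hA v hv
      rw [Module.End.mem_eigenspace_iff] at hv ⊢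
      have h := LinearMap.ext_iff.mp hA v
      simp only [Module.End.mul_apply] at h
      rw [hv, map_smul] at h
      exact h
    rcases hirr _ (inv S hZS) (inv X hZX) (inv Y hZY) with h | h
    · exact absurd h hc
    · exact h
  have hYv : ∀ v : V, Y v = c • v - X v := by
    intro v
    have hv : (X + Y) v = c • v := by
      rw [Module.End.mem_eigenspace_iff.symm, hEig]; trivial
    rw [LinearMap.add_apply] at hv
    exact eq_sub_of_add_eq' hv
  -- a common eigenvector v₀
  obtain ⟨a, ha⟩ := Module.End.exists_eigenvalue X
  obtain ⟨v₀, hv₀⟩ := ha.exists_hasEigenvector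
  have hXv₀ : X v₀ = a • v₀ := hv₀.apply_eq_smul
  have hv₀ne : v₀ ≠ 0 := hv₀.2
  set b : ℂ := c - a with hb
  have hYv₀ : Y v₀ = b • v₀ := by rw [hYv, hXv₀, hb, sub_smul]
  -- action on w = S v₀
  have hSw : S (S v₀) = v₀ := by
    have h := LinearMap.ext_iff.mp hs v₀
    simpa [Module.End.mul_apply] using h
  have hXw : X (S v₀) = b • (S v₀) - v₀ := by
    have h := LinearMap.ext_iff.mp hXS v₀
    simp only [Module.End.mul_apply, LinearMap.sub_apply, Module.End.one_apply] at h
    rw [hYv₀, map_smul] at h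
    exact h
  have hYw : Y (S v₀) = a • (S v₀) + v₀ := by
    have h := LinearMap.ext_iff.mp hYS v₀
    simp only [Module.End.mul_apply, LinearMap.add_apply, Module.End.one_apply] at h
    rw [hXv₀, map_smul] at h
    exact h
  by_cases hcase : ∃ lam : ℂ, S v₀ = lam • v₀
  · -- one-dimensional case
    obtain ⟨lam, hlam⟩ := hcase
    have hl2 : lam * lam = 1 := by
      have h : (lam * lam) • v₀ = v₀ := by
        calc (lam * lam) • v₀ = lam • (lam • v₀) := by rw [mul_smul]
          _ = lam • S v₀ := by rw [hlam]
          _ = S (lam • v₀) := (map_smul S lam v₀).symm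
          _ = S (S v₀) := by rw [← hlam]
          _ = v₀ := hSw
      have h0 : (lam * lam - 1) • v₀ = 0 := by
        rw [sub_smul, one_smul, h, sub_self]
      rcases smul_eq_zero.mp h0 with h | h
      · linear_combination h
      · exact absurd h hv₀ne
    have hrel2 : lam * a - lam * b + 1 = 0 := by
      have h : (lam * a) • v₀ = (lam * b) • v₀ - v₀ := by
        calc (lam * a) • v₀ = lam • X v₀ := by rw [hXv₀, smul_smul]
          _ = X (lam • v₀) := (map_smul X lam v₀).symm
          _ = X (S v₀) := by rw [← hlam]
          _ = b • S v₀ - v₀ := hXw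
          _ = b • (lam • v₀) - v₀ := by rw [hlam]
          _ = (lam * b) • v₀ - v₀ := by rw [smul_smul, mul_comm]
      have h0 : (lam * a - lam * b + 1) • v₀ = 0 := by
        rw [add_smul, sub_smul, one_smul, h]; abel
      rcases smul_eq_zero.mp h0 with h | h
      · exact h
      · exact absurd h hv₀ne
    have hdim1 : Module.finrank ℂ V = 1 := by
      rw [finrank_eq_one_iff_of_nonzero v₀ hv₀ne]
      exact hecke_line_top S X Y hirr v₀ hv₀ne lam a b hlam hXv₀ hYv₀
    refine ⟨Or.inl hdim1, Or.inl ⟨hdim1, a, b, v₀, hv₀ne, hXv₀, hYv₀, ?_⟩⟩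
    rcases mul_self_eq_one_iff.mp hl2 with h1 | h1
    · left
      constructor
      · rw [h1] at hrel2; linear_combination -hrel2
      · rw [hlam, h1, one_smul]
    · right
      constructor
      · rw [h1] at hrel2; linear_combination hrel2
      · rw [hlam, h1, neg_smul, one_smul]
  · -- two-dimensional case
    push_neg at hcase
    have hind : LinearIndependent ℂ ![v₀, S v₀] := by
      rw [linearIndependent_fin2]
      refine ⟨?_, ?_⟩
      · show S v₀ ≠ 0
        intro h0
        exact hcase 0 (by rw [h0, zero_smul])
      · intro t ht
        simp only [Matrix.cons_val_one, Matrix.head_cons, Matrix.cons_val_zero] at ht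
        show False
        apply hcase t
        calc S v₀ = S (t • S v₀) := by rw [ht]
          _ = t • S (S v₀) := map_smul S t (S v₀)
          _ = t • v₀ := by rw [hSw]
    have hrange : Set.range ![v₀, S v₀] = {v₀, S v₀} := by
      ext z
      simp only [Set.mem_range, Fin.exists_fin_two, Matrix.cons_val_zero, Matrix.cons_val_one,
        Matrix.head_cons, Set.mem_insert_iff, Set.mem_singleton_iff]
      tauto
    have hPtop : Submodule.span ℂ ({v₀, S v₀} : Set V) = ⊤ := by
      have hmem0 : v₀ ∈ Submodule.span ℂ ({v₀, S v₀} : Set V) :=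
        Submodule.subset_span (Set.mem_insert _ _)
      have hmem1 : S v₀ ∈ Submodule.span ℂ ({v₀, S v₀} : Set V) :=
        Submodule.subset_span (Set.mem_insert_of_mem _ rfl)
      have key : ∀ A : Module.End ℂ V,
          A v₀ ∈ Submodule.span ℂ ({v₀, S v₀} : Set V) →
          A (S v₀) ∈ Submodule.span ℂ ({v₀, S v₀} : Set V) →
          ∀ v ∈ Submodule.span ℂ ({v₀, S v₀} : Set V),
            A v ∈ Submodule.span ℂ ({v₀, S v₀} : Set V) := by
        intro A h0 h1 v hv
        have hle : Submodule.span ℂ ({v₀, S v₀} : Set V) ≤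
            Submodule.comap A (Submodule.span ℂ ({v₀, S v₀} : Set V)) := by
          rw [Submodule.span_le]
          rintro z (rfl | rfl)
          · exact h0
          · exact h1
        exact hle hv
      rcases hirr _ (key S hmem1 (by rw [hSw]; exact hmem0))
          (key X (by rw [hXv₀]; exact Submodule.smul_mem _ a hmem0)
            (by rw [hXw]; exact Submodule.sub_mem _ (Submodule.smul_mem _ b hmem1) hmem0))
          (key Y (by rw [hYv₀]; exact Submodule.smul_mem _ b hmem0)
            (by rw [hYw]; exact Submodule.add_mem _ (Submodule.smul_mem _ a hmem1) hmem0)) with h | h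
      · rw [h] at hmem0; exact absurd (Submodule.mem_bot ℂ |>.mp hmem0) hv₀ne
      · exact h
    have hspanB : ⊤ ≤ Submodule.span ℂ (Set.range ![v₀, S v₀]) := by
      rw [hrange, hPtop]
    let B : Module.Basis (Fin 2) ℂ V := Module.Basis.mk hind hspanB
    have hB0 : B 0 = v₀ := by simp [B, Module.Basis.mk_apply]
    have hB1 : B 1 = S v₀ := by simp [B, Module.Basis.mk_apply]
    have hdim2 : Module.finrank ℂ V = 2 := by
      rw [Module.finrank_eq_card_basis B, Fintype.card_fin]
    have hne1 : a ≠ b + 1 := by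
      intro hab
      have hu : v₀ + S v₀ ≠ 0 := by
        intro h0
        apply hcase (-1)
        rw [neg_smul, one_smul]
        exact eq_neg_of_add_eq_zero_right h0
      have htop := hecke_line_top S X Y hirr (v₀ + S v₀) hu 1 b a
        (by rw [map_add, hSw, one_smul]; abel)
        (by rw [map_add, hXv₀, hXw, smul_add]
            rw [hab]
            module)
        (by rw [map_add, hYv₀, hYw, smul_add]
            rw [hab]
            module)
      have := (finrank_eq_one_iff_of_nonzero _ hu).mpr htop
      rw [hdim2] at this
      exact absurd this (by norm_num)
    have hne2 : a ≠ b - 1 := by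
      intro hab
      have hu : v₀ - S v₀ ≠ 0 := by
        intro h0
        apply hcase 1
        rw [one_smul]
        exact (sub_eq_zero.mp h0).symm
      have htop := hecke_line_top S X Y hirr (v₀ - S v₀) hu (-1) b a
        (by rw [map_sub, hSw, neg_smul, one_smul]; abel)
        (by rw [map_sub, hXv₀, hXw, smul_sub]
            rw [hab]
            module)
        (by rw [map_sub, hYv₀, hYw, smul_sub]
            rw [hab]
            module)
      have := (finrank_eq_one_iff_of_nonzero _ hu).mpr htop
      rw [hdim2] at this
      exact absurd this (by norm_num)
    refine ⟨Or.inr hdim2, Or.inr ⟨a, b, hne1, hne2, B, ?_, ?_, ?_, ?_, ?_, ?_⟩⟩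
    · rw [hB0, hXv₀]
    · rw [hB1, hB0, hXw]
    · rw [hB0, hYv₀]
    · rw [hB1, hB0, hYw]
    · rw [hB0, hB1]
    · rw [hB1, hB0, hSw]
end

section
/- Let λ be a partition of n and T a standard λ-tableau. Then there exists a sequence of admissible transpositions s_{k_1}, …, s_{k_ℓ} (applied successively, each yielding a standard λ-tableau) transforming T into the canonical tableau T(λ), and these can be chosen so that ℓ equals the Coxeter length of the permutation s_{k_1} s_{k_2} ⋯ s_{k_ℓ} in S_n. -/
/-- `T : Fin n → ℕ × ℕ` is a standard tableau of shape `λ` (a Young diagram with `n`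
cells): `T` is a bijection from 0-indexed entries onto the cells of `λ` such that
entries increase along rows and down columns. -/
def IsStandardTableau (μ : YoungDiagram) (n : ℕ) (T : Fin n → ℕ × ℕ) : Prop :=
  Function.Injective T ∧ Set.range T = (μ.cells : Set (ℕ × ℕ)) ∧
    ∀ j k : Fin n,
      (((T k).1 = (T j).1 ∧ (T k).2 = (T j).2 + 1) ∨
       ((T k).1 = (T j).1 + 1 ∧ (T k).2 = (T j).2)) → j < k

/-- The content `s − r` of a box `(r, s)`. -/
def boxContent (p : ℕ × ℕ) : ℤ := (p.2 : ℤ) - (p.1 : ℤ)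

/-- The Coxeter length of a permutation of `Fin n`: the minimal number of adjacent
transpositions `(a, a+1)` whose product is `w`. -/
noncomputable def coxeterLength (n : ℕ) (w : Equiv.Perm (Fin n)) : ℕ :=
  sInf {m | ∃ l : List (Equiv.Perm (Fin n)), l.length = m ∧
    (∀ x ∈ l, ∃ a b : Fin n, (b : ℕ) = (a : ℕ) + 1 ∧ x = Equiv.swap a b) ∧
    l.prod = w}

def lexLt (p q : ℕ × ℕ) : Prop := p.1 < q.1 ∨ (p.1 = q.1 ∧ p.2 < q.2)

instance lexLt.dec (p q : ℕ × ℕ) : Decidable (lexLt p q) := by unfold lexLt; infer_instance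

lemma lexLt_asymm {p q : ℕ × ℕ} (h : lexLt p q) (h' : lexLt q p) : False := by
  unfold lexLt at *; omega

lemma lexLt_trans {p q r : ℕ × ℕ} (h : lexLt p q) (h' : lexLt q r) : lexLt p r := by
  unfold lexLt at *; omega

lemma lexLt_or {p q : ℕ × ℕ} (h : p ≠ q) : lexLt p q ∨ lexLt q p := by
  rw [Ne, Prod.ext_iff] at h; unfold lexLt; omega

def invCount (n : ℕ) (T : Fin n → ℕ × ℕ) : ℕ :=
  (Finset.univ.filter fun jk : Fin n × Fin n => jk.1 < jk.2 ∧ lexLt (T jk.2) (T jk.1)).card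

section tableau
variable {μ : YoungDiagram} {n : ℕ} {T : Fin n → ℕ × ℕ}

lemma mem_of_std (hT : IsStandardTableau μ n T) (j : Fin n) : T j ∈ μ := by
  have : T j ∈ Set.range T := ⟨j, rfl⟩
  rw [hT.2.1] at this
  simpa [YoungDiagram.mem_cells] using this

lemma surj_of_std (hT : IsStandardTableau μ n T) {p : ℕ × ℕ} (hp : p ∈ μ) :
    ∃ j, T j = p := by
  have : p ∈ Set.range T := by rw [hT.2.1]; simpa [YoungDiagram.mem_cells] using hp
  exact this

lemma row_lt (hT : IsStandardTableau μ n T) {j k : Fin n}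
    (h1 : (T j).1 = (T k).1) (h2 : (T j).2 < (T k).2) : j < k := by
  suffices H : ∀ d : ℕ, ∀ j k : Fin n, (T j).1 = (T k).1 → (T j).2 + (d + 1) = (T k).2 → j < k by
    exact H ((T k).2 - (T j).2 - 1) j k h1 (by omega)
  intro d
  induction d with
  | zero => exact fun j k h1 h2 => hT.2.2 j k (Or.inl ⟨h1.symm, by omega⟩)
  | succ d ih =>
    intro j k h1 h2
    have hkm : ((T k).1, (T k).2) ∈ μ := by simpa using mem_of_std hT k
    have hc : ((T k).1, (T k).2 - 1) ∈ μ := μ.up_left_mem le_rfl (by omega) hkm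
    obtain ⟨j', hj'⟩ := surj_of_std hT hc
    have e1 : (T j').1 = (T k).1 := by rw [hj']
    have e2 : (T j').2 = (T k).2 - 1 := by rw [hj']
    have g1 : (T j).1 = (T j').1 := by omega
    have g2 : (T j).2 + (d + 1) = (T j').2 := by omega
    have h1' : j < j' := ih j j' g1 g2
    have h2' : j' < k := hT.2.2 j' k (Or.inl ⟨e1.symm, by omega⟩)
    exact h1'.trans h2'

lemma col_lt (hT : IsStandardTableau μ n T) {j k : Fin n}
    (h1 : (T j).2 = (T k).2) (h2 : (T j).1 < (T k).1) : j < k := by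
  suffices H : ∀ d : ℕ, ∀ j k : Fin n, (T j).2 = (T k).2 → (T j).1 + (d + 1) = (T k).1 → j < k by
    exact H ((T k).1 - (T j).1 - 1) j k h1 (by omega)
  intro d
  induction d with
  | zero => exact fun j k h1 h2 => hT.2.2 j k (Or.inr ⟨by omega, h1.symm⟩)
  | succ d ih =>
    intro j k h1 h2
    have hkm : ((T k).1, (T k).2) ∈ μ := by simpa using mem_of_std hT k
    have hc : ((T k).1 - 1, (T k).2) ∈ μ := μ.up_left_mem (by omega) le_rfl hkm
    obtain ⟨j', hj'⟩ := surj_of_std hT hc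
    have e1 : (T j').1 = (T k).1 - 1 := by rw [hj']
    have e2 : (T j').2 = (T k).2 := by rw [hj']
    have g1 : (T j).2 = (T j').2 := by omega
    have g2 : (T j).1 + (d + 1) = (T j').1 := by omega
    have h1' : j < j' := ih j j' g1 g2
    have h2' : j' < k := hT.2.2 j' k (Or.inr ⟨by omega, e2.symm⟩)
    exact h1'.trans h2'

lemma dom_lt (hT : IsStandardTableau μ n T) {j k : Fin n}
    (h1 : (T j).1 ≤ (T k).1) (h2 : (T j).2 ≤ (T k).2) (hne : j ≠ k) : j < k := by
  have hTne : T j ≠ T k := fun h => hne (hT.1 h)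
  rcases eq_or_lt_of_le h1 with he1 | hl1
  · rcases eq_or_lt_of_le h2 with he2 | hl2
    · exact absurd (Prod.ext he1 he2) hTne
    · exact row_lt hT he1 hl2
  · have hc : ((T j).1, (T k).2) ∈ μ := by
      refine μ.up_left_mem (le_of_lt hl1) le_rfl ?_
      simpa using mem_of_std hT k
    obtain ⟨m, hm⟩ := surj_of_std hT hc
    have e1 : (T m).1 = (T j).1 := by rw [hm]
    have e2 : (T m).2 = (T k).2 := by rw [hm]
    have h2' : m < k := col_lt hT e2 (by omega)
    rcases eq_or_lt_of_le h2 with he2 | hl2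
    · have : T j = T m := Prod.ext e1.symm (by omega)
      rwa [hT.1 this]
    · exact (row_lt hT e1.symm (by omega)).trans h2'

end tableau
section tab2
variable {μ : YoungDiagram} {n : ℕ} {T : Fin n → ℕ × ℕ}

lemma swap_lt_cases {a b j k : Fin n} (hab : (b : ℕ) = (a : ℕ) + 1)
    (h : Equiv.swap a b j < Equiv.swap a b k) : j < k ∨ (j = b ∧ k = a) := by
  simp only [Equiv.swap_apply_def] at h
  split_ifs at h <;>
    [skip; skip; skip; skip; skip; skip; skip; skip; skip] <;>
    simp only [Fin.ext_iff, Fin.lt_def] at * <;> omega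

lemma swap_lt_cases' {a b j k : Fin n} (hab : (b : ℕ) = (a : ℕ) + 1)
    (h : j < k) : Equiv.swap a b j < Equiv.swap a b k ∨ (j = a ∧ k = b) := by
  rcases lt_trichotomy (Equiv.swap a b j) (Equiv.swap a b k) with h1 | h1 | h1
  · exact Or.inl h1
  · exact absurd ((Equiv.swap a b).injective h1) (by omega)
  · rcases swap_lt_cases hab h1 with h2 | ⟨h2, h3⟩
    · omega
    · exact Or.inr ⟨h3, h2⟩

lemma key_step (hT : IsStandardTableau μ n T) {a b : Fin n} (hab : (b : ℕ) = (a : ℕ) + 1)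
    (hinv : lexLt (T b) (T a)) : (T b).1 < (T a).1 ∧ (T a).2 < (T b).2 := by
  have hab : a < b := by omega
  have h1 : (T b).1 < (T a).1 := by
    rcases hinv with h | ⟨h1, h2⟩
    · exact h
    · exact absurd (row_lt hT h1 h2) (by omega)
  refine ⟨h1, ?_⟩
  by_contra hc
  push_neg at hc
  exact absurd (dom_lt hT (le_of_lt h1) hc (by omega)) (by omega)

lemma content_big (hT : IsStandardTableau μ n T) {a b : Fin n} (hab : (b : ℕ) = (a : ℕ) + 1)
    (hinv : lexLt (T b) (T a)) :
    1 < |boxContent (T a) - boxContent (T b)| := by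
  obtain ⟨h1, h2⟩ := key_step hT hab hinv
  unfold boxContent
  rcases abs_cases ((((T a).2 : ℤ) - (T a).1) - (((T b).2 : ℤ) - (T b).1)) with ⟨he, _⟩ | ⟨he, _⟩ <;>
    rw [he] <;> omega

lemma swap_std (hT : IsStandardTableau μ n T) {a b : Fin n} (hab : (b : ℕ) = (a : ℕ) + 1)
    (hinv : lexLt (T b) (T a)) :
    IsStandardTableau μ n (T ∘ ⇑(Equiv.swap a b)) := by
  obtain ⟨h1, h2⟩ := key_step hT hab hinv
  refine ⟨hT.1.comp (Equiv.swap a b).injective, ?_, ?_⟩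
  · rw [Set.range_comp, Equiv.range_eq_univ, Set.image_univ, hT.2.1]
  · intro j k hjk
    have hlt := hT.2.2 _ _ hjk
    rcases swap_lt_cases hab hlt with h | ⟨hj, hk⟩
    · exact h
    · exfalso
      subst hj hk
      simp only [Function.comp_apply, Equiv.swap_apply_left, Equiv.swap_apply_right] at hjk
      omega

end tab2

section tab3
variable {μ : YoungDiagram} {n : ℕ} {T : Fin n → ℕ × ℕ}

lemma invCount_zero (hinj : Function.Injective T) (h : invCount n T = 0) :
    ∀ j k : Fin n, j < k → lexLt (T j) (T k) := by
  intro j k hjk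
  have hmem : (j, k) ∉ Finset.univ.filter
      fun jk : Fin n × Fin n => jk.1 < jk.2 ∧ lexLt (T jk.2) (T jk.1) := by
    rw [Finset.card_eq_zero.mp h]
    exact Finset.notMem_empty _
  simp only [Finset.mem_filter, Finset.mem_univ, true_and, not_and] at hmem
  have hne : T j ≠ T k := fun he => absurd (hinj he) (by omega)
  rcases lexLt_or hne with h' | h'
  · exact h'
  · exact absurd h' (hmem hjk)

lemma exists_adj_inv (hinj : Function.Injective T) (h : invCount n T ≠ 0) :
    ∃ a b : Fin n, (b : ℕ) = (a : ℕ) + 1 ∧ lexLt (T b) (T a) := by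
  by_contra hcon
  push_neg at hcon
  apply h
  have hadj : ∀ a b : Fin n, (b : ℕ) = (a : ℕ) + 1 → lexLt (T a) (T b) := by
    intro a b hab
    have h1 := hcon a b hab
    have hne : T a ≠ T b := fun he => absurd (hinj he) (by omega)
    rcases lexLt_or hne with h' | h'
    · exact h'
    · exact absurd h' h1
  have hmono : ∀ j k : Fin n, j < k → lexLt (T j) (T k) := by
    suffices H : ∀ d : ℕ, ∀ j k : Fin n, (j : ℕ) + (d + 1) = (k : ℕ) → lexLt (T j) (T k) by
      intro j k hjk; exact H ((k : ℕ) - (j : ℕ) - 1) j k (by omega)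
    intro d
    induction d with
    | zero => intro j k hjk; exact hadj j k (by omega)
    | succ d ih =>
      intro j k hjk
      have hlt : (j : ℕ) + (d + 1) < n := by have := k.isLt; omega
      set j' : Fin n := ⟨(j : ℕ) + (d + 1), hlt⟩ with hj'
      exact lexLt_trans (ih j j' (by simp [hj'])) (hadj j' k (by simp [hj']; omega))
  unfold invCount
  rw [Finset.card_eq_zero, Finset.filter_eq_empty_iff]
  rintro ⟨j, k⟩ -
  simp only [not_and]
  intro hjk h'
  exact lexLt_asymm h' (hmono j k hjk)

lemma invCount_swap (hT : IsStandardTableau μ n T) {a b : Fin n} (hab : (b : ℕ) = (a : ℕ) + 1)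
    (hinv : lexLt (T b) (T a)) :
    invCount n (T ∘ ⇑(Equiv.swap a b)) + 1 = invCount n T := by
  classical
  set σ := Equiv.swap a b with hσ
  set S : Finset (Fin n × Fin n) :=
    Finset.univ.filter (fun jk : Fin n × Fin n => jk.1 < jk.2 ∧ lexLt (T jk.2) (T jk.1)) with hS
  set S' : Finset (Fin n × Fin n) :=
    Finset.univ.filter (fun jk : Fin n × Fin n =>
      jk.1 < jk.2 ∧ lexLt ((T ∘ ⇑σ) jk.2) ((T ∘ ⇑σ) jk.1)) with hS'
  have hab' : a < b := by omega
  have hmemS : (a, b) ∈ S := by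
    simp only [hS, Finset.mem_filter, Finset.mem_univ, true_and]
    exact ⟨hab', hinv⟩
  have hσσ : ∀ x, σ (σ x) = x := fun x => Equiv.swap_apply_self a b x
  -- core membership iff
  have hcore : ∀ j k : Fin n, (j, k) ∈ S' ↔ ((σ j, σ k) ∈ S ∧ (σ j, σ k) ≠ (a, b)) := by
    intro j k
    simp only [hS, hS', Finset.mem_filter, Finset.mem_univ, true_and, Function.comp_apply,
      Ne, Prod.mk.injEq, not_and]
    constructor
    · rintro ⟨hjk, hD⟩
      have hσlt : σ j < σ k := by
        rcases swap_lt_cases' hab hjk with h' | ⟨hj, hk⟩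
        · exact h'
        · exfalso
          subst hj hk
          rw [hσ, Equiv.swap_apply_left, Equiv.swap_apply_right] at hD
          exact lexLt_asymm hD hinv
      refine ⟨⟨hσlt, hD⟩, ?_⟩
      intro hja hkb
      have hjb : j = b := by rw [← hσσ j, hja, hσ, Equiv.swap_apply_left]
      have hka : k = a := by rw [← hσσ k, hkb, hσ, Equiv.swap_apply_right]
      subst hjb hka
      omega
    · rintro ⟨⟨hσlt, hD⟩, hne⟩
      refine ⟨?_, hD⟩
      rcases swap_lt_cases hab hσlt with h' | ⟨hj, hk⟩
      · exact h'
      · exfalso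
        subst hj hk
        exact hne (by rw [hσ, Equiv.swap_apply_right]) (by rw [hσ, Equiv.swap_apply_left])
  -- S' is the image of S.erase (a,b)
  have himg : S' = (S.erase (a, b)).image (fun jk : Fin n × Fin n => (σ jk.1, σ jk.2)) := by
    ext ⟨j, k⟩
    rw [Finset.mem_image]
    constructor
    · intro hm
      obtain ⟨hm1, hm2⟩ := (hcore j k).mp hm
      exact ⟨(σ j, σ k), Finset.mem_erase.mpr ⟨hm2, hm1⟩, by simp [hσσ]⟩
    · rintro ⟨⟨x, y⟩, hxy, hxyeq⟩
      obtain ⟨hne, hmem⟩ := Finset.mem_erase.mp hxy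
      have hx : x = σ j := by
        have := congrArg Prod.fst hxyeq; simp at this; rw [← this, hσσ]
      have hy : y = σ k := by
        have := congrArg Prod.snd hxyeq; simp at this; rw [← this, hσσ]
      subst hx hy
      exact (hcore j k).mpr ⟨hmem, hne⟩
  have hinj2 : Function.Injective (fun jk : Fin n × Fin n => (σ jk.1, σ jk.2)) := by
    intro x y hxy
    simp only [Prod.mk.injEq] at hxy
    exact Prod.ext (σ.injective hxy.1) (σ.injective hxy.2)
  have hcard : S'.card = S.card - 1 := by
    rw [himg, Finset.card_image_of_injective _ hinj2, Finset.card_erase_of_mem hmemS]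
  have hpos : 0 < S.card := Finset.card_pos.mpr ⟨(a, b), hmemS⟩
  show S'.card + 1 = S.card
  omega

end tab3

def permInv (n : ℕ) (w : Equiv.Perm (Fin n)) : ℕ :=
  (Finset.univ.filter fun jk : Fin n × Fin n => jk.1 < jk.2 ∧ w jk.2 < w jk.1).card

lemma permInv_one (n : ℕ) : permInv n 1 = 0 := by
  unfold permInv
  rw [Finset.card_eq_zero, Finset.filter_eq_empty_iff]
  rintro ⟨j, k⟩ -
  simp only [Equiv.Perm.coe_one, id_eq, not_and]
  intro h h'
  exact absurd h' (not_lt.mpr (le_of_lt h))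

lemma permInv_mul_le {n : ℕ} {a b : Fin n} (hab : (b : ℕ) = (a : ℕ) + 1)
    (w : Equiv.Perm (Fin n)) :
    permInv n (Equiv.swap a b * w) ≤ permInv n w + 1 := by
  classical
  unfold permInv
  have hsub : (Finset.univ.filter fun jk : Fin n × Fin n =>
      jk.1 < jk.2 ∧ (Equiv.swap a b * w) jk.2 < (Equiv.swap a b * w) jk.1) ⊆
      (Finset.univ.filter fun jk : Fin n × Fin n => jk.1 < jk.2 ∧ w jk.2 < w jk.1)
        ∪ {(w⁻¹ a, w⁻¹ b)} := by
    rintro ⟨j, k⟩ hm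
    replace hm := Finset.mem_filter.mp hm
    simp only [Finset.mem_univ, true_and, Equiv.Perm.mul_apply] at hm
    obtain ⟨hjk, hlt⟩ := hm
    rw [Finset.mem_union]
    by_cases hw : w k < w j
    · exact Or.inl (by simp only [Finset.mem_filter, Finset.mem_univ, true_and]; exact ⟨hjk, hw⟩)
    · right
      rcases swap_lt_cases hab hlt with h' | ⟨hj, hk⟩
      · exact absurd h' hw
      · simp only [Finset.mem_singleton, Prod.mk.injEq]
        constructor
        · rw [← hk]; simp
        · rw [← hj]; simp
  calc _ ≤ _ := Finset.card_le_card hsub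
    _ ≤ _ + ({(w⁻¹ a, w⁻¹ b)} : Finset (Fin n × Fin n)).card := Finset.card_union_le _ _
    _ = _ + 1 := by rw [Finset.card_singleton]

lemma permInv_prod_le {n : ℕ} (l : List (Equiv.Perm (Fin n)))
    (hl : ∀ x ∈ l, ∃ a b : Fin n, (b : ℕ) = (a : ℕ) + 1 ∧ x = Equiv.swap a b) :
    permInv n l.prod ≤ l.length := by
  induction l with
  | nil => simp [permInv_one]
  | cons x l ih =>
    obtain ⟨a, b, hab, rfl⟩ := hl x List.mem_cons_self
    rw [List.prod_cons]
    calc permInv n (Equiv.swap a b * l.prod) ≤ permInv n l.prod + 1 := permInv_mul_le hab _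
      _ ≤ l.length + 1 := by
          have := ih (fun y hy => hl y (List.mem_cons_of_mem _ hy))
          omega
      _ = (Equiv.swap a b :: l).length := by simp

theorem aux_main {μ : YoungDiagram} {n : ℕ} :
    ∀ N (T : Fin n → ℕ × ℕ), invCount n T ≤ N → IsStandardTableau μ n T →
    ∃ (ℓ : ℕ) (ks : Fin ℓ → Fin n × Fin n) (Ts : Fin (ℓ + 1) → (Fin n → ℕ × ℕ)),
      (∀ i : Fin ℓ, ((ks i).2 : ℕ) = ((ks i).1 : ℕ) + 1) ∧
      Ts 0 = T ∧
      (∀ i : Fin ℓ,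
        IsStandardTableau μ n (Ts i.castSucc) ∧
        1 < |boxContent (Ts i.castSucc ((ks i).1)) -
              boxContent (Ts i.castSucc ((ks i).2))| ∧
        Ts i.succ = Ts i.castSucc ∘ (Equiv.swap ((ks i).1) ((ks i).2))) ∧
      IsStandardTableau μ n (Ts (Fin.last ℓ)) ∧
      (∀ j k : Fin n, j < k → lexLt (Ts (Fin.last ℓ) j) (Ts (Fin.last ℓ) k)) ∧
      ℓ = invCount n T ∧
      Ts (Fin.last ℓ) =
        T ∘ ⇑((List.ofFn fun i : Fin ℓ => Equiv.swap ((ks i).1) ((ks i).2)).prod) := by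
  have base : ∀ (T : Fin n → ℕ × ℕ), invCount n T = 0 → IsStandardTableau μ n T →
      ∃ (ℓ : ℕ) (ks : Fin ℓ → Fin n × Fin n) (Ts : Fin (ℓ + 1) → (Fin n → ℕ × ℕ)),
      (∀ i : Fin ℓ, ((ks i).2 : ℕ) = ((ks i).1 : ℕ) + 1) ∧
      Ts 0 = T ∧
      (∀ i : Fin ℓ,
        IsStandardTableau μ n (Ts i.castSucc) ∧
        1 < |boxContent (Ts i.castSucc ((ks i).1)) -
              boxContent (Ts i.castSucc ((ks i).2))| ∧
        Ts i.succ = Ts i.castSucc ∘ (Equiv.swap ((ks i).1) ((ks i).2))) ∧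
      IsStandardTableau μ n (Ts (Fin.last ℓ)) ∧
      (∀ j k : Fin n, j < k → lexLt (Ts (Fin.last ℓ) j) (Ts (Fin.last ℓ) k)) ∧
      ℓ = invCount n T ∧
      Ts (Fin.last ℓ) =
        T ∘ ⇑((List.ofFn fun i : Fin ℓ => Equiv.swap ((ks i).1) ((ks i).2)).prod) := by
    intro T h0 hT
    refine ⟨0, Fin.elim0, fun _ => T, fun i => i.elim0, rfl, fun i => i.elim0, hT,
      invCount_zero hT.1 h0, h0.symm, ?_⟩
    funext x
    simp
  intro N
  induction N with
  | zero => intro T hle hT; exact base T (by omega) hT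
  | succ N ih =>
    intro T hle hT
    by_cases h0 : invCount n T = 0
    · exact base T h0 hT
    · obtain ⟨a, b, hab, hinv⟩ := exists_adj_inv hT.1 h0
      have hT' := swap_std hT hab hinv
      have hcnt := invCount_swap hT hab hinv
      obtain ⟨ℓ', ks', Ts', A', B', C', D', E', F', G'⟩ :=
        ih (T ∘ ⇑(Equiv.swap a b)) (by omega) hT'
      refine ⟨ℓ' + 1, Fin.cons (a, b) ks', Fin.cons T Ts', ?_, ?_, ?_, ?_, ?_, ?_, ?_⟩
      · intro i
        refine Fin.cases ?_ ?_ i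
        · simpa using hab
        · intro j; simpa using A' j
      · simp
      · intro i
        refine Fin.cases ?_ ?_ i
        · refine ⟨?_, ?_, ?_⟩
          · simpa using hT
          · simpa using content_big hT hab hinv
          · have h1 : (Fin.cons T Ts' : Fin (ℓ' + 2) → Fin n → ℕ × ℕ) (Fin.succ 0) = Ts' 0 :=
              Fin.cons_succ _ _ _
            rw [h1, B']
            simp
        · intro j
          obtain ⟨c1, c2, c3⟩ := C' j
          refine ⟨?_, ?_, ?_⟩
          · simpa only [← Fin.succ_castSucc, Fin.cons_succ] using c1
          · simpa only [← Fin.succ_castSucc, Fin.cons_succ] using c2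
          · simpa only [← Fin.succ_castSucc, Fin.cons_succ] using c3
      · simpa only [← Fin.succ_last, Fin.cons_succ] using D'
      · simpa only [← Fin.succ_last, Fin.cons_succ] using E'
      · omega
      · simp only [← Fin.succ_last, Fin.cons_succ]
        rw [G', List.ofFn_succ]
        simp only [Fin.cons_succ, Fin.cons_zero, List.prod_cons]
        funext x
        simp [Equiv.Perm.mul_apply]


/-- Every standard `λ`-tableau `T` can be transformed into the canonical (row-reading)
tableau `T(λ)` by a sequence of admissible transpositions — each step swaps two
consecutive entries whose boxes have contents differing by more than `1`, and yields a
standard tableau — and the number `ℓ` of steps can be chosen to equal the Coxeter length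
of the product of the corresponding simple transpositions in `Sₙ`.

Here `Ts i` is the tableau after `i` steps, step `i` swaps the (0-indexed) entries
`(ks i).1` and `(ks i).2 = (ks i).1 + 1`, and the final tableau is canonical: its
entries are increasing for the lexicographic (row-major) order on boxes, which
characterizes `T(λ)`. -/
theorem standard_tableau_to_canonical (n : ℕ) (μ : YoungDiagram) (hμ : μ.card = n)
    (T : Fin n → ℕ × ℕ) (hT : IsStandardTableau μ n T) :
    ∃ (ℓ : ℕ) (ks : Fin ℓ → Fin n × Fin n) (Ts : Fin (ℓ + 1) → (Fin n → ℕ × ℕ)),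
      (∀ i : Fin ℓ, ((ks i).2 : ℕ) = ((ks i).1 : ℕ) + 1) ∧
      Ts 0 = T ∧
      (∀ i : Fin ℓ,
        IsStandardTableau μ n (Ts i.castSucc) ∧
        1 < |boxContent (Ts i.castSucc ((ks i).1)) -
              boxContent (Ts i.castSucc ((ks i).2))| ∧
        Ts i.succ = Ts i.castSucc ∘ (Equiv.swap ((ks i).1) ((ks i).2))) ∧
      IsStandardTableau μ n (Ts (Fin.last ℓ)) ∧
      (∀ j k : Fin n, j < k →
        ((Ts (Fin.last ℓ) j).1 < (Ts (Fin.last ℓ) k).1 ∨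
         ((Ts (Fin.last ℓ) j).1 = (Ts (Fin.last ℓ) k).1 ∧
          (Ts (Fin.last ℓ) j).2 < (Ts (Fin.last ℓ) k).2))) ∧
      ℓ = coxeterLength n
        ((List.ofFn (fun i : Fin ℓ => Equiv.swap ((ks i).1) ((ks i).2))).prod) := by
  obtain ⟨ℓ, ks, Ts, A, B, C, D, E, F, G⟩ := aux_main (invCount n T) T le_rfl hT
  refine ⟨ℓ, ks, Ts, A, B, C, D, E, ?_⟩
  set L := List.ofFn fun i : Fin ℓ => Equiv.swap ((ks i).1) ((ks i).2) with hL
  set w := L.prod with hw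
  set Sset : Set ℕ := {m | ∃ l : List (Equiv.Perm (Fin n)), l.length = m ∧
    (∀ x ∈ l, ∃ a b : Fin n, (b : ℕ) = (a : ℕ) + 1 ∧ x = Equiv.swap a b) ∧
    l.prod = w} with hSset
  have hmemℓ : ℓ ∈ Sset := by
    refine ⟨L, by simp [hL], ?_, rfl⟩
    intro x hx
    rw [hL, List.mem_ofFn] at hx
    obtain ⟨i, rfl⟩ := hx
    exact ⟨(ks i).1, (ks i).2, A i, rfl⟩
  have hEC : ∀ j k : Fin n, j < k → lexLt ((T ∘ ⇑w) j) ((T ∘ ⇑w) k) := by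
    intro j k hjk
    have := E j k hjk
    rwa [G] at this
  have hval : ∀ x : Fin n, (T ∘ ⇑w) (w⁻¹ x) = T x := by
    intro x; simp [Equiv.Perm.inv_def]
  have hkey : ∀ j k : Fin n, lexLt (T k) (T j) ↔ w⁻¹ k < w⁻¹ j := by
    intro j k
    constructor
    · intro h
      rcases lt_trichotomy (w⁻¹ k) (w⁻¹ j) with h' | h' | h'
      · exact h'
      · exfalso
        have : k = j := by
          have := congrArg w h'
          simpa [Equiv.Perm.inv_def] using this
        subst this
        exact lexLt_asymm h h
      · exfalso
        have := hEC _ _ h'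
        rw [hval, hval] at this
        exact lexLt_asymm h this
    · intro h
      have := hEC _ _ h
      rwa [hval, hval] at this
  have hinvw : invCount n T = permInv n w⁻¹ := by
    unfold invCount permInv
    apply congrArg
    apply Finset.filter_congr
    rintro ⟨j, k⟩ -
    rw [and_congr_right_iff]
    intro _
    exact hkey j k
  have hcl : coxeterLength n w = sInf Sset := by
    unfold coxeterLength
    rw [hSset]
  rw [hcl]
  have h1 : sInf Sset ≤ ℓ := Nat.sInf_le hmemℓ
  have h2 : ℓ ≤ sInf Sset := by
    obtain ⟨l, hlen, hels, hprod⟩ := Nat.sInf_mem ⟨ℓ, hmemℓ⟩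
    have hels' : ∀ x ∈ (l.map fun y => y⁻¹).reverse,
        ∃ a b : Fin n, (b : ℕ) = (a : ℕ) + 1 ∧ x = Equiv.swap a b := by
      intro x hx
      rw [List.mem_reverse, List.mem_map] at hx
      obtain ⟨y, hy, rfl⟩ := hx
      obtain ⟨a, b, hab, rfl⟩ := hels y hy
      exact ⟨a, b, hab, Equiv.swap_inv a b⟩
    have hp := permInv_prod_le _ hels'
    rw [← List.prod_inv_reverse, hprod] at hp
    have hlen' : (l.map fun y => y⁻¹).reverse.length = l.length := by simp
    rw [hlen', hlen] at hp
    omega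
  omega
end
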